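/- arXiv:1203.5300 — 4 statements merged into one kernel-verified Lean document; each statement's English description precedes it below -/
import Mathlib

section
/- Let A, B ∈ M_n be Hermitian with spectra in [ω, Ω], f increasing and convex on [ω, Ω], and Φ : M_n → M_m a unital positive linear map. Suppose there is a unitary U ∈ M_m with f(tΦ(A)+(1-t)Φ(B)) ≤ U[tΦ(f(A))+(1-t)Φ(f(B))]U* for all t ∈ [0,1]. Then λ_j(∫_0^1 f(Φ(tA+(1-t)B)) dt) ≤ λ_j((Φ(f(A))+Φ(f(B)))/2) for all 1 ≤ j ≤ m. -/
open scoped ComplexOrder Matrix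

/-- The `j`-th largest eigenvalue (counted with multiplicity) of a Hermitian matrix. -/
noncomputable def eigDesc {n : ℕ} {A : Matrix (Fin n) (Fin n) ℂ}
    (hA : A.IsHermitian) (j : Fin n) : ℝ :=
  hA.eigenvalues (Tuple.sort hA.eigenvalues j.rev)

namespace HH
open Matrix Finset intervalIntegral

variable {m : ℕ}


lemma sum_dotProduct' (s : Finset (Fin m)) (u : Fin m → (Fin m → ℂ)) (w : Fin m → ℂ) :
    (∑ i ∈ s, u i) ⬝ᵥ w = ∑ i ∈ s, u i ⬝ᵥ w := by
  simp only [dotProduct, Finset.sum_apply, Finset.sum_mul]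
  exact Finset.sum_comm

lemma dotProduct_sum' (s : Finset (Fin m)) (w : Fin m → ℂ) (u : Fin m → (Fin m → ℂ)) :
    w ⬝ᵥ (∑ i ∈ s, u i) = ∑ i ∈ s, w ⬝ᵥ u i := by
  simp only [dotProduct, Finset.sum_apply, Finset.mul_sum]
  exact Finset.sum_comm

lemma mulVec_sum' (M : Matrix (Fin m) (Fin m) ℂ) (s : Finset (Fin m))
    (u : Fin m → (Fin m → ℂ)) : M *ᵥ (∑ i ∈ s, u i) = ∑ i ∈ s, M *ᵥ u i := by
  have := map_sum M.mulVecLin u s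
  simpa only [Matrix.mulVecLin_apply] using this

lemma real_smul_vec (r : ℝ) (v : Fin m → ℂ) : r • v = (r : ℂ) • v := by
  ext k; simp [Complex.real_smul]

lemma quad_eq (W : Matrix (Fin m) (Fin m) ℂ) (b : Fin m → Fin m → ℂ)
    (hb : ∀ i j, star (b i) ⬝ᵥ b j = if i = j then 1 else 0)
    (ν : Fin m → ℝ) (hbe : ∀ i, W *ᵥ b i = (ν i : ℂ) • b i)
    (g : Fin m → ℂ) :
    star (∑ i, g i • b i) ⬝ᵥ (W *ᵥ ∑ i, g i • b i)
      = ((∑ i, ν i * Complex.normSq (g i) : ℝ) : ℂ) := by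
  have h1 : W *ᵥ (∑ i, g i • b i) = ∑ i, (g i * (ν i : ℂ)) • b i := by
    rw [mulVec_sum']
    refine Finset.sum_congr rfl fun i _ => ?_
    rw [Matrix.mulVec_smul, hbe i, smul_smul]
  have h2 : star (∑ i, g i • b i) = ∑ i, (starRingEnd ℂ (g i)) • star (b i) := by
    rw [star_sum]
    refine Finset.sum_congr rfl fun i _ => ?_
    rw [star_smul]; rfl
  rw [h1, h2, sum_dotProduct']
  have h3 : ∀ i : Fin m, (starRingEnd ℂ (g i)) • star (b i) ⬝ᵥ (∑ k, (g k * (ν k : ℂ)) • b k)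
      = (ν i * Complex.normSq (g i) : ℝ) := by
    intro i
    rw [smul_dotProduct, dotProduct_sum']
    have : ∀ k, star (b i) ⬝ᵥ (g k * (ν k : ℂ)) • b k
        = (g k * (ν k : ℂ)) * (if i = k then 1 else 0) := by
      intro k; rw [dotProduct_smul, hb i k]; simp [mul_comm]
    simp only [this, mul_ite, mul_one, mul_zero, Finset.sum_ite_eq, Finset.mem_univ, if_true]
    rw [smul_eq_mul]
    push_cast
    rw [← Complex.mul_conj]
    ring
  rw [Finset.sum_congr rfl fun i _ => h3 i]
  push_cast
  rfl

lemma quad_norm (b : Fin m → Fin m → ℂ)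
    (hb : ∀ i j, star (b i) ⬝ᵥ b j = if i = j then 1 else 0) (g : Fin m → ℂ) :
    star (∑ i, g i • b i) ⬝ᵥ (∑ i, g i • b i)
      = ((∑ i, Complex.normSq (g i) : ℝ) : ℂ) := by
  have := quad_eq (1 : Matrix (Fin m) (Fin m) ℂ) b hb (fun _ => 1)
    (fun i => by simp) g
  simpa using this

lemma sums_le (ν : Fin m → ℝ) (s : Finset (Fin m)) (c : ℝ) (hc : ∀ i ∈ s, ν i ≤ c)
    (g : Fin m → ℂ) (hg : ∀ i ∉ s, g i = 0) :
    (∑ i, ν i * Complex.normSq (g i)) ≤ c * (∑ i, Complex.normSq (g i)) := by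
  have e1 : (∑ i, ν i * Complex.normSq (g i)) = ∑ i ∈ s, ν i * Complex.normSq (g i) :=
    (Finset.sum_subset (Finset.subset_univ s) (fun i _ hi => by simp [hg i hi])).symm
  have e2 : (∑ i, Complex.normSq (g i)) = ∑ i ∈ s, Complex.normSq (g i) :=
    (Finset.sum_subset (Finset.subset_univ s) (fun i _ hi => by simp [hg i hi])).symm
  rw [e1, e2, Finset.mul_sum]
  exact Finset.sum_le_sum fun i hi =>
    mul_le_mul_of_nonneg_right (hc i hi) (Complex.normSq_nonneg _)

lemma sums_ge (ν : Fin m → ℝ) (s : Finset (Fin m)) (c : ℝ) (hc : ∀ i ∈ s, c ≤ ν i)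
    (g : Fin m → ℂ) (hg : ∀ i ∉ s, g i = 0) :
    c * (∑ i, Complex.normSq (g i)) ≤ (∑ i, ν i * Complex.normSq (g i)) := by
  have := sums_le (fun i => -ν i) s (-c) (fun i hi => neg_le_neg (hc i hi)) g hg
  simp only [neg_mul, Finset.sum_neg_distrib] at this
  linarith

lemma li_of_dot {ι : Type*} [Fintype ι] [DecidableEq ι] (b : ι → Fin m → ℂ)
    (hb : ∀ i j, star (b i) ⬝ᵥ b j = if i = j then 1 else 0) :
    LinearIndependent ℂ b := by
  rw [Fintype.linearIndependent_iff]
  intro g hg k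
  have h := congrArg (fun v => star (b k) ⬝ᵥ v) hg
  simp only [dotProduct_zero] at h
  rw [show star (b k) ⬝ᵥ (∑ i, g i • b i) = ∑ i, star (b k) ⬝ᵥ (g i • b i) from by
        simp only [dotProduct, Finset.sum_apply, Finset.mul_sum]; exact Finset.sum_comm] at h
  simp only [dotProduct_smul, hb k, smul_eq_mul, mul_ite, mul_one, mul_zero] at h
  simpa using h

lemma span_coeffs (b : Fin m → Fin m → ℂ) (s : Finset (Fin m)) (v : Fin m → ℂ)
    (hv : v ∈ Submodule.span ℂ (Set.range (fun i : {i // i ∈ s} => b i))) :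
    ∃ g : Fin m → ℂ, (∀ i ∉ s, g i = 0) ∧ v = ∑ i, g i • b i := by
  classical
  rw [Submodule.mem_span_range_iff_exists_fun] at hv
  obtain ⟨c, hc⟩ := hv
  refine ⟨fun i => if h : i ∈ s then c ⟨i, h⟩ else 0, fun i hi => by simp [hi], ?_⟩
  rw [← hc]
  rw [show (∑ i, (if h : i ∈ s then c ⟨i, h⟩ else 0) • b i)
      = ∑ i ∈ s, (if h : i ∈ s then c ⟨i, h⟩ else 0) • b i from
    (Finset.sum_subset (Finset.subset_univ s) (fun i _ hi => by simp [hi])).symm]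
  rw [← Finset.sum_coe_sort s]
  refine Finset.sum_congr rfl fun i _ => ?_
  simp [i.2]

lemma exists_mem_inf_ne_zero (S T : Submodule ℂ (Fin m → ℂ))
    (h : m < Module.finrank ℂ S + Module.finrank ℂ T) :
    ∃ v : Fin m → ℂ, v ∈ S ⊓ T ∧ v ≠ 0 := by
  have h1 := Submodule.finrank_sup_add_finrank_inf_eq S T
  have h2 : Module.finrank ℂ ↥(S ⊔ T) ≤ m := by
    have := Submodule.finrank_le (S ⊔ T) (M := Fin m → ℂ) (R := ℂ)
    simpa [Module.finrank_pi] using this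
  have h3 : 0 < Module.finrank ℂ ↥(S ⊓ T) := by omega
  have : Nontrivial ↥(S ⊓ T) := Module.nontrivial_of_finrank_pos h3
  obtain ⟨x, hx⟩ := exists_ne (0 : ↥(S ⊓ T))
  exact ⟨↑x, x.2, fun h0 => hx (Subtype.ext h0)⟩


lemma eigBasis_dot {W : Matrix (Fin m) (Fin m) ℂ} (hW : W.IsHermitian) (i j : Fin m) :
    star ((WithLp.equiv 2 _) (hW.eigenvectorBasis i)) ⬝ᵥ
      ((WithLp.equiv 2 _) (hW.eigenvectorBasis j)) = if i = j then 1 else 0 := by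
  have h := (orthonormal_iff_ite (𝕜 := ℂ)).mp hW.eigenvectorBasis.orthonormal i j
  rw [← h, EuclideanSpace.inner_eq_star_dotProduct, dotProduct_comm]
  rfl

lemma weyl {X Z : Matrix (Fin m) (Fin m) ℂ} (hX : X.IsHermitian) (hZ : Z.IsHermitian)
    (U : Matrix (Fin m) (Fin m) ℂ) (hU : U ∈ Matrix.unitaryGroup (Fin m) ℂ)
    (hpsd : (U * Z * Uᴴ - X).PosSemidef) (j : Fin m) :
    eigDesc hX j ≤ eigDesc hZ j := by
  classical
  set σ := Tuple.sort hX.eigenvalues with hσ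
  set τ := Tuple.sort hZ.eigenvalues with hτ
  set a : Fin m → ℝ := fun i => hX.eigenvalues (σ i) with ha
  set νz : Fin m → ℝ := fun i => hZ.eigenvalues (τ i) with hνz
  set u : Fin m → Fin m → ℂ := fun i => (WithLp.equiv 2 _) (hX.eigenvectorBasis (σ i)) with hu
  set w : Fin m → Fin m → ℂ :=
    fun i => U *ᵥ (WithLp.equiv 2 _) (hZ.eigenvectorBasis (τ i)) with hw
  have hUU : Uᴴ * U = 1 := by
    rw [← Matrix.star_eq_conjTranspose]
    exact Unitary.star_mul_self_of_mem hU
  have hu_dot : ∀ i k, star (u i) ⬝ᵥ u k = if i = k then 1 else 0 := by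
    intro i k
    rw [hu]
    simp only []
    rw [eigBasis_dot hX (σ i) (σ k)]
    simp [EmbeddingLike.apply_eq_iff_eq]
  have hw_dot : ∀ i k, star (w i) ⬝ᵥ w k = if i = k then 1 else 0 := by
    intro i k
    rw [hw]
    simp only []
    rw [Matrix.star_mulVec, Matrix.dotProduct_mulVec, Matrix.vecMul_vecMul, hUU,
      Matrix.vecMul_one, eigBasis_dot hZ (τ i) (τ k)]
    simp [EmbeddingLike.apply_eq_iff_eq]
  have hu_eig : ∀ i, X *ᵥ u i = ((a i : ℝ) : ℂ) • u i := by
    intro i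
    have h := hX.mulVec_eigenvectorBasis (σ i)
    rw [real_smul_vec] at h
    exact h
  have hw_eig : ∀ i, (U * Z * Uᴴ) *ᵥ w i = ((νz i : ℝ) : ℂ) • w i := by
    intro i
    have h : Z *ᵥ (WithLp.equiv 2 _) (hZ.eigenvectorBasis (τ i))
        = (hZ.eigenvalues (τ i)) • (WithLp.equiv 2 _) (hZ.eigenvectorBasis (τ i)) :=
      hZ.mulVec_eigenvectorBasis (τ i)
    rw [hw]
    simp only []
    rw [Matrix.mulVec_mulVec, show U * Z * Uᴴ * U = U * Z from by
      rw [Matrix.mul_assoc (U * Z), hUU, Matrix.mul_one], ← Matrix.mulVec_mulVec, h,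
      real_smul_vec, Matrix.mulVec_smul]
  set s₁ : Finset (Fin m) := Finset.Ici j.rev with hs₁
  set s₂ : Finset (Fin m) := Finset.Iic j.rev with hs₂
  set S := Submodule.span ℂ (Set.range fun i : {i // i ∈ s₁} => u i) with hS
  set T := Submodule.span ℂ (Set.range fun i : {i // i ∈ s₂} => w i) with hT
  have hliS : LinearIndependent ℂ (fun i : {i // i ∈ s₁} => u ↑i) :=
    (li_of_dot u hu_dot).comp Subtype.val Subtype.val_injective
  have hliT : LinearIndependent ℂ (fun i : {i // i ∈ s₂} => w ↑i) :=
    (li_of_dot w hw_dot).comp Subtype.val Subtype.val_injective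
  have hfS : Module.finrank ℂ S = s₁.card := by
    rw [hS, finrank_span_eq_card hliS]
    exact Fintype.card_coe s₁
  have hfT : Module.finrank ℂ T = s₂.card := by
    rw [hT, finrank_span_eq_card hliT]
    exact Fintype.card_coe s₂
  obtain ⟨v, hvmem, hv0⟩ := exists_mem_inf_ne_zero S T (by
    rw [hfS, hfT, hs₁, hs₂, Fin.card_Ici, Fin.card_Iic]
    have := j.rev.isLt
    omega)
  obtain ⟨g₁, hg₁0, hg₁⟩ := span_coeffs u s₁ v hvmem.1
  obtain ⟨g₂, hg₂0, hg₂⟩ := span_coeffs w s₂ v hvmem.2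
  have hq1 : star v ⬝ᵥ (X *ᵥ v) = ((∑ i, a i * Complex.normSq (g₁ i) : ℝ) : ℂ) := by
    rw [hg₁]; exact quad_eq X u hu_dot a hu_eig g₁
  have hq2 : star v ⬝ᵥ ((U * Z * Uᴴ) *ᵥ v)
      = ((∑ i, νz i * Complex.normSq (g₂ i) : ℝ) : ℂ) := by
    rw [hg₂]; exact quad_eq (U * Z * Uᴴ) w hw_dot νz hw_eig g₂
  have hN12 : (∑ i, Complex.normSq (g₁ i)) = (∑ i, Complex.normSq (g₂ i)) := by
    have e1 : star v ⬝ᵥ v = ((∑ i, Complex.normSq (g₁ i) : ℝ) : ℂ) := by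
      rw [hg₁]; exact quad_norm u hu_dot g₁
    have e2 : star v ⬝ᵥ v = ((∑ i, Complex.normSq (g₂ i) : ℝ) : ℂ) := by
      rw [hg₂]; exact quad_norm w hw_dot g₂
    exact_mod_cast e1.symm.trans e2
  set N := (∑ i, Complex.normSq (g₁ i)) with hNdef
  have hNpos : 0 < N := by
    rcases (lt_or_eq_of_le (Finset.sum_nonneg fun i _ => Complex.normSq_nonneg (g₁ i))) with h | h
    · exact h
    · exfalso
      apply hv0
      have hz : ∀ i ∈ Finset.univ, Complex.normSq (g₁ i) = 0 := by
        intro i _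
        exact (Finset.sum_eq_zero_iff_of_nonneg
          (fun i _ => Complex.normSq_nonneg (g₁ i))).mp h.symm i (Finset.mem_univ i)
      rw [hg₁]
      refine Finset.sum_eq_zero fun i _ => ?_
      rw [Complex.normSq_eq_zero.mp (hz i (Finset.mem_univ i))]
      simp
  -- monotonicity of sorted eigenvalues
  have hamono : Monotone a := Tuple.monotone_sort hX.eigenvalues
  have hνmono : Monotone νz := Tuple.monotone_sort hZ.eigenvalues
  have hlow : eigDesc hX j * N ≤ ∑ i, a i * Complex.normSq (g₁ i) :=
    sums_ge a s₁ (eigDesc hX j) (fun i hi => hamono (Finset.mem_Ici.mp hi)) g₁ hg₁0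
  have hhigh : (∑ i, νz i * Complex.normSq (g₂ i)) ≤ eigDesc hZ j * N := by
    rw [hN12]
    exact sums_le νz s₂ (eigDesc hZ j) (fun i hi => hνmono (Finset.mem_Iic.mp hi)) g₂ hg₂0
  have hmid : (∑ i, a i * Complex.normSq (g₁ i)) ≤ ∑ i, νz i * Complex.normSq (g₂ i) := by
    have h0 := hpsd.dotProduct_mulVec_nonneg v
    rw [Matrix.sub_mulVec, dotProduct_sub, hq1, hq2] at h0
    have := (Complex.le_def.mp h0).1
    simp only [Complex.zero_re, Complex.sub_re, Complex.ofReal_re] at this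
    linarith
  have : eigDesc hX j * N ≤ eigDesc hZ j * N := le_trans hlow (le_trans hmid hhigh)
  exact le_of_mul_le_mul_right this hNpos



lemma real_smul_mat {k l : ℕ} (r : ℝ) (M : Matrix (Fin k) (Fin l) ℂ) :
    r • M = (r : ℂ) • M := by
  ext i j; simp [Complex.real_smul]

lemma isHermitian_real_smul (r : ℝ) {M : Matrix (Fin m) (Fin m) ℂ}
    (h : M.IsHermitian) : (r • M).IsHermitian := by
  show (r • M)ᴴ = r • M
  rw [Matrix.conjTranspose_smul, h]
  norm_num

/-- unitary conjugation of a nonneg diagonal is PSD -/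
lemma psd_conj_diag (V : Matrix (Fin m) (Fin m) ℂ) (d : Fin m → ℂ)
    (hd : ∀ k, 0 ≤ d k) : (V * Matrix.diagonal d * Vᴴ).PosSemidef :=
  (Matrix.posSemidef_diagonal_iff.mpr hd).mul_mul_conjTranspose_same V

lemma spectral_decomp {M : Matrix (Fin m) (Fin m) ℂ} (hM : M.IsHermitian) :
    M = (hM.eigenvectorUnitary : Matrix (Fin m) (Fin m) ℂ) *
      Matrix.diagonal (fun k => (hM.eigenvalues k : ℂ)) *
      (hM.eigenvectorUnitary : Matrix (Fin m) (Fin m) ℂ)ᴴ := by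
  have := hM.spectral_theorem
  rw [← Matrix.star_eq_conjTranspose]
  exact this

lemma smul_one_conj (c : ℂ) {M : Matrix (Fin m) (Fin m) ℂ} (hM : M.IsHermitian) :
    c • (1 : Matrix (Fin m) (Fin m) ℂ)
      = (hM.eigenvectorUnitary : Matrix (Fin m) (Fin m) ℂ) *
        Matrix.diagonal (fun _ => c) *
        (hM.eigenvectorUnitary : Matrix (Fin m) (Fin m) ℂ)ᴴ := by
  have h1 : (hM.eigenvectorUnitary : Matrix (Fin m) (Fin m) ℂ) *
      (hM.eigenvectorUnitary : Matrix (Fin m) (Fin m) ℂ)ᴴ = 1 := by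
    rw [← Matrix.star_eq_conjTranspose]
    exact Unitary.mul_star_self_of_mem hM.eigenvectorUnitary.2
  have h2 : Matrix.diagonal (fun _ : Fin m => c) = c • (1 : Matrix (Fin m) (Fin m) ℂ) := by
    ext i j
    by_cases hij : i = j <;> simp [Matrix.diagonal_apply, Matrix.one_apply, hij]
  rw [h2, Matrix.mul_smul, Matrix.smul_mul, Matrix.mul_one, h1]

/-- lower spectral bound gives PSD -/
lemma psd_sub_smul_one {M : Matrix (Fin m) (Fin m) ℂ} (hM : M.IsHermitian) {c : ℝ}
    (h : ∀ i, c ≤ hM.eigenvalues i) : (M - c • 1).PosSemidef := by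
  rw [real_smul_mat]
  rw [spectral_decomp hM, smul_one_conj (c : ℂ) hM, ← Matrix.sub_mul, ← Matrix.mul_sub,
    Matrix.diagonal_sub]
  exact psd_conj_diag _ _ fun k => by
    rw [show ((hM.eigenvalues k : ℂ) - (c : ℂ)) = ((hM.eigenvalues k - c : ℝ) : ℂ) from by
      push_cast; ring]
    exact Complex.zero_le_real.mpr (by linarith [h k])

lemma psd_smul_one_sub {M : Matrix (Fin m) (Fin m) ℂ} (hM : M.IsHermitian) {c : ℝ}
    (h : ∀ i, hM.eigenvalues i ≤ c) : (c • 1 - M).PosSemidef := by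
  rw [real_smul_mat]
  rw [spectral_decomp hM, smul_one_conj (c : ℂ) hM, ← Matrix.sub_mul, ← Matrix.mul_sub,
    Matrix.diagonal_sub]
  exact psd_conj_diag _ _ fun k => by
    rw [show ((c : ℂ) - (hM.eigenvalues k : ℂ)) = ((c - hM.eigenvalues k : ℝ) : ℂ) from by
      push_cast; ring]
    exact Complex.zero_le_real.mpr (by linarith [h k])

/-- PSD gives spectral bounds -/
lemma eig_ge_of_psd {M : Matrix (Fin m) (Fin m) ℂ} (hM : M.IsHermitian) {c : ℝ}
    (h : (M - c • 1).PosSemidef) (i : Fin m) : c ≤ hM.eigenvalues i := by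
  set u : Fin m → ℂ := (WithLp.equiv 2 _) (hM.eigenvectorBasis i) with hudef
  have h1 : star u ⬝ᵥ u = 1 := by
    have := eigBasis_dot hM i i
    rw [if_pos rfl] at this
    exact this
  have h2 : M *ᵥ u = ((hM.eigenvalues i : ℝ) : ℂ) • u := by
    have := hM.mulVec_eigenvectorBasis i
    rw [real_smul_vec] at this
    exact this
  have h3 := h.dotProduct_mulVec_nonneg u
  rw [Matrix.sub_mulVec, real_smul_mat, Matrix.smul_mulVec, Matrix.one_mulVec, h2,
    ← sub_smul, dotProduct_smul, h1, smul_eq_mul, mul_one] at h3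
  rw [show ((hM.eigenvalues i : ℂ) - (c : ℂ)) = ((hM.eigenvalues i - c : ℝ) : ℂ) from by
    push_cast; ring] at h3
  have := Complex.zero_le_real.mp h3
  linarith

lemma eig_le_of_psd {M : Matrix (Fin m) (Fin m) ℂ} (hM : M.IsHermitian) {c : ℝ}
    (h : (c • 1 - M).PosSemidef) (i : Fin m) : hM.eigenvalues i ≤ c := by
  set u : Fin m → ℂ := (WithLp.equiv 2 _) (hM.eigenvectorBasis i) with hudef
  have h1 : star u ⬝ᵥ u = 1 := by
    have := eigBasis_dot hM i i
    rw [if_pos rfl] at this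
    exact this
  have h2 : M *ᵥ u = ((hM.eigenvalues i : ℝ) : ℂ) • u := by
    have := hM.mulVec_eigenvectorBasis i
    rw [real_smul_vec] at this
    exact this
  have h3 := h.dotProduct_mulVec_nonneg u
  rw [Matrix.sub_mulVec, real_smul_mat, Matrix.smul_mulVec, Matrix.one_mulVec, h2,
    ← sub_smul, dotProduct_smul, h1, smul_eq_mul, mul_one] at h3
  rw [show ((c : ℂ) - (hM.eigenvalues i : ℂ)) = ((c - hM.eigenvalues i : ℝ) : ℂ) from by
    push_cast; ring] at h3
  have := Complex.zero_le_real.mp h3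
  linarith

lemma psd_real_smul {M : Matrix (Fin m) (Fin m) ℂ} (h : M.PosSemidef) {c : ℝ}
    (hc : 0 ≤ c) : (c • M).PosSemidef := by
  rw [real_smul_mat]
  exact h.smul (Complex.zero_le_real.mpr hc)


lemma unitary_entry_norm_le (V : Matrix (Fin m) (Fin m) ℂ) (hV : V * Vᴴ = 1)
    (i k : Fin m) : ‖V i k‖ ≤ 1 := by
  have h1 : (V * Vᴴ) i i = 1 := by rw [hV]; exact Matrix.one_apply_eq i
  rw [Matrix.mul_apply] at h1
  have h2 : ∀ j, V i j * Vᴴ j i = ((Complex.normSq (V i j) : ℝ) : ℂ) := by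
    intro j
    rw [Matrix.conjTranspose_apply, Complex.star_def, Complex.mul_conj]
  rw [Finset.sum_congr rfl fun j _ => h2 j] at h1
  have h3 : (∑ j, Complex.normSq (V i j)) = 1 := by
    have := h1
    push_cast at this
    exact_mod_cast this
  have h4 : Complex.normSq (V i k) ≤ 1 := by
    rw [← h3]
    exact Finset.single_le_sum (fun j _ => Complex.normSq_nonneg _) (Finset.mem_univ k)
  have h5 : ‖V i k‖ ^ 2 ≤ 1 := by
    rw [Complex.sq_norm]
    exact h4
  nlinarith [norm_nonneg (V i k)]

lemma conj_diag_entry (V : Matrix (Fin m) (Fin m) ℂ) (d : Fin m → ℂ) (i j : Fin m) :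
    (V * Matrix.diagonal d * Vᴴ) i j = ∑ k, V i k * d k * star (V j k) := by
  rw [Matrix.mul_apply]
  refine Finset.sum_congr rfl fun k _ => ?_
  rw [Matrix.mul_diagonal, Matrix.conjTranspose_apply]

lemma cfc_sub_cfc_entry_bound {M : Matrix (Fin m) (Fin m) ℂ} (hM : M.IsHermitian)
    (f g : ℝ → ℝ) {ε : ℝ}
    (hfg : ∀ k, |f (hM.eigenvalues k) - g (hM.eigenvalues k)| ≤ ε) (i j : Fin m) :
    ‖(hM.cfc f - hM.cfc g) i j‖ ≤ m * ε := by
  have hV : (hM.eigenvectorUnitary : Matrix (Fin m) (Fin m) ℂ) *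
      (hM.eigenvectorUnitary : Matrix (Fin m) (Fin m) ℂ)ᴴ = 1 := by
    rw [← Matrix.star_eq_conjTranspose]
    exact Unitary.mul_star_self_of_mem hM.eigenvectorUnitary.2
  set V : Matrix (Fin m) (Fin m) ℂ := (hM.eigenvectorUnitary : Matrix (Fin m) (Fin m) ℂ)
  have hdiff : hM.cfc f - hM.cfc g
      = V * Matrix.diagonal (fun k => ((f (hM.eigenvalues k) - g (hM.eigenvalues k) : ℝ) : ℂ))
        * Vᴴ := by
    unfold Matrix.IsHermitian.cfc
    simp only [Unitary.conjStarAlgAut_apply]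
    rw [← Matrix.star_eq_conjTranspose,← Matrix.sub_mul, ← Matrix.mul_sub, Matrix.diagonal_sub]
    congr 1
    congr 1
    congr 1
    ext k
    simp [Function.comp]
  rw [hdiff, conj_diag_entry]
  refine le_trans (norm_sum_le _ _) ?_
  have hterm : ∀ k, ‖V i k * ((f (hM.eigenvalues k) - g (hM.eigenvalues k) : ℝ) : ℂ)
      * star (V j k)‖ ≤ ε := by
    intro k
    rw [norm_mul, norm_mul, norm_star, Complex.norm_real, Real.norm_eq_abs]
    have h1 := unitary_entry_norm_le V hV i k
    have h2 := unitary_entry_norm_le V hV j k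
    have h3 := hfg k
    have h0 : (0:ℝ) ≤ ε := le_trans (abs_nonneg _) h3
    have := norm_nonneg (V i k)
    have := norm_nonneg (V j k)
    have hin : ‖V i k‖ * |f (hM.eigenvalues k) - g (hM.eigenvalues k)| ≤ 1 * ε :=
      mul_le_mul h1 h3 (abs_nonneg _) zero_le_one
    have hout : ‖V i k‖ * |f (hM.eigenvalues k) - g (hM.eigenvalues k)| * ‖V j k‖
        ≤ (1 * ε) * 1 := mul_le_mul hin h2 (norm_nonneg _) (by positivity)
    simpa using hout
  calc (∑ k, ‖V i k * ((f (hM.eigenvalues k) - g (hM.eigenvalues k) : ℝ) : ℂ) * star (V j k)‖)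
      ≤ ∑ _k : Fin m, ε := Finset.sum_le_sum fun k _ => hterm k
    _ = m * ε := by simp [Finset.sum_const, nsmul_eq_mul]

lemma cfc_entry_continuousOn {P Q : Matrix (Fin m) (Fin m) ℂ}
    (hP : P.IsHermitian) (hQ : Q.IsHermitian) {ω Ω : ℝ}
    (hP1 : (P - ω • 1).PosSemidef) (hP2 : (Ω • 1 - P).PosSemidef)
    (hQ1 : (Q - ω • 1).PosSemidef) (hQ2 : (Ω • 1 - Q).PosSemidef)
    (f : ℝ → ℝ) (hcont : ContinuousOn f (Set.Icc ω Ω)) (i j : Fin m) :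
    ContinuousOn (fun t : ℝ => (cfc f (t • P + (1 - t) • Q)) i j) (Set.Icc (0:ℝ) 1) := by
  set Mt : ℝ → Matrix (Fin m) (Fin m) ℂ := fun t => t • P + (1 - t) • Q with hMtdef
  have hMtH : ∀ t : ℝ, (Mt t).IsHermitian := fun t =>
    (isHermitian_real_smul t hP).add (isHermitian_real_smul _ hQ)
  have hdecomp : ∀ (t : ℝ) (R S : Matrix (Fin m) (Fin m) ℂ),
      t • (P - R) + (1 - t) • (Q - S) = Mt t - (t • R + (1-t) • S) := by
    intro t R S
    rw [hMtdef]
    simp only [smul_sub]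
    abel
  have hcomb : ∀ (c : ℝ) (t : ℝ), t • (c • (1 : Matrix (Fin m) (Fin m) ℂ))
      + (1 - t) • (c • (1 : Matrix (Fin m) (Fin m) ℂ)) = c • 1 := by
    intro c t
    rw [← add_smul]
    norm_num
  have hlow : ∀ t ∈ Set.Icc (0:ℝ) 1, ((Mt t) - ω • 1).PosSemidef := by
    intro t ht
    have := (psd_real_smul hP1 ht.1).add (psd_real_smul hQ1 (c := 1 - t) (by linarith [ht.2]))
    rwa [hdecomp, hcomb] at this
  have hhigh : ∀ t ∈ Set.Icc (0:ℝ) 1, (Ω • 1 - (Mt t)).PosSemidef := by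
    intro t ht
    have := (psd_real_smul hP2 ht.1).add (psd_real_smul hQ2 (c := 1 - t) (by linarith [ht.2]))
    have e : t • (Ω • (1 : Matrix (Fin m) (Fin m) ℂ) - P) + (1 - t) • (Ω • 1 - Q)
        = Ω • 1 - Mt t := by
      rw [hMtdef]
      simp only [smul_sub]
      rw [show (t • (Ω • (1 : Matrix (Fin m) (Fin m) ℂ)) - t • P)
        + ((1-t) • (Ω • (1 : Matrix (Fin m) (Fin m) ℂ)) - (1-t) • Q)
        = (t • (Ω • (1 : Matrix (Fin m) (Fin m) ℂ)) + (1-t) • (Ω • 1)) - (t • P + (1-t) • Q)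
        from by abel, hcomb]
    rwa [e] at this
  have heig : ∀ t ∈ Set.Icc (0:ℝ) 1, ∀ k, (hMtH t).eigenvalues k ∈ Set.Icc ω Ω := by
    intro t ht k
    exact ⟨eig_ge_of_psd (hMtH t) (hlow t ht) k, eig_le_of_psd (hMtH t) (hhigh t ht) k⟩
  have hex : ∀ N : ℕ, ∃ p : Polynomial ℝ,
      ∀ x ∈ Set.Icc ω Ω, |Polynomial.eval x p - f x| < 1/(N+1) := fun N =>
    exists_polynomial_near_of_continuousOn ω Ω f hcont _ (by positivity)
  choose p hp using hex
  set F : ℕ → ℝ → ℂ := fun N t => (Polynomial.aeval (Mt t) (p N)) i j with hFdef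
  have hMtc : Continuous Mt := by fun_prop
  have hFc : ∀ N, Continuous (F N) := fun N =>
    (((p N).continuous_aeval).comp hMtc).matrix_elem i j
  have hbound : ∀ N, ∀ t ∈ Set.Icc (0:ℝ) 1,
      dist ((cfc f (Mt t)) i j) (F N t) ≤ m * (1/(N+1)) := by
    intro N t ht
    have e1 : cfc f (Mt t) = (hMtH t).cfc f := (hMtH t).cfc_eq f
    have e2 : (Polynomial.aeval (Mt t)) (p N) = (hMtH t).cfc (p N).eval := by
      rw [← cfc_polynomial (p N) (Mt t) (hMtH t)]
      exact ((hMtH t).cfc_eq (p N).eval)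
    rw [hFdef]
    simp only []
    rw [e1, e2, dist_eq_norm]
    have : ((hMtH t).cfc f) i j - ((hMtH t).cfc (p N).eval) i j
        = ((hMtH t).cfc f - (hMtH t).cfc (p N).eval) i j := by
      simp [Matrix.sub_apply]
    rw [this]
    refine cfc_sub_cfc_entry_bound (hMtH t) f (p N).eval (fun k => ?_) i j
    have hk := heig t ht k
    have := hp N _ hk
    rw [abs_sub_comm]
    exact le_of_lt this
  have htu : TendstoUniformlyOn F (fun t => (cfc f (Mt t)) i j) Filter.atTop
      (Set.Icc (0:ℝ) 1) := by
    rw [Metric.tendstoUniformlyOn_iff]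
    intro ε hε
    have htend : Filter.Tendsto (fun N : ℕ => (m : ℝ) * (1/(N+1))) Filter.atTop (nhds 0) := by
      have := tendsto_one_div_add_atTop_nhds_zero_nat.const_mul (m : ℝ)
      simpa using this
    filter_upwards [htend.eventually_lt_const hε] with N hN t ht
    exact lt_of_le_of_lt (hbound N t ht) hN
  exact htu.continuousOn (Filter.Eventually.of_forall fun N => (hFc N).continuousOn).frequently



lemma quad_expand (M : Matrix (Fin m) (Fin m) ℂ) (x : Fin m → ℂ) :
    star x ⬝ᵥ (M *ᵥ x) = ∑ i, ∑ k, (star x i * x k) * M i k := by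
  simp only [dotProduct, mulVec, Finset.mul_sum]
  refine Finset.sum_congr rfl fun i _ => Finset.sum_congr rfl fun k _ => ?_
  simp only [Pi.star_apply]
  ring

lemma key_psd (U Pf Qf : Matrix (Fin m) (Fin m) ℂ)
    (G : ℝ → Matrix (Fin m) (Fin m) ℂ)
    (hGcont : ∀ i j, ContinuousOn (fun t => (G t) i j) (Set.Icc (0:ℝ) 1))
    (X : Matrix (Fin m) (Fin m) ℂ)
    (hXe : ∀ i j, X i j = ∫ t in (0:ℝ)..1, (G t) i j)
    (hHerm : ((U * ((1/2:ℝ) • (Pf + Qf)) * Uᴴ) - X).IsHermitian)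
    (hpos : ∀ t ∈ Set.Icc (0:ℝ) 1,
      (U * (t • Pf + (1-t) • Qf) * Uᴴ - G t).PosSemidef) :
    (U * ((1/2:ℝ) • (Pf + Qf)) * Uᴴ - X).PosSemidef := by
  refine Matrix.PosSemidef.of_dotProduct_mulVec_nonneg hHerm fun x => ?_
  set ψ : ℝ → ℂ := fun t => ∑ i, ∑ k, (star x i * x k) * (G t) i k with hψdef
  have hψG : ∀ t, star x ⬝ᵥ ((G t) *ᵥ x) = ψ t := fun t => quad_expand (G t) x
  have hGint : ∀ i k, IntervalIntegrable (fun t => (G t) i k) MeasureTheory.volume 0 1 := by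
    intro i k
    refine ContinuousOn.intervalIntegrable ?_
    rw [Set.uIcc_of_le (zero_le_one)]
    exact hGcont i k
  have hψcont : ContinuousOn ψ (Set.Icc (0:ℝ) 1) := by
    rw [hψdef]
    refine continuousOn_finset_sum _ fun i _ => continuousOn_finset_sum _ fun k _ => ?_
    exact continuousOn_const.mul (hGcont i k)
  have hψint : IntervalIntegrable ψ MeasureTheory.volume 0 1 := by
    refine ContinuousOn.intervalIntegrable ?_
    rw [Set.uIcc_of_le (zero_le_one)]
    exact hψcont
  have hXq : star x ⬝ᵥ (X *ᵥ x) = ∫ t in (0:ℝ)..1, ψ t := by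
    have h1 : ∫ t in (0:ℝ)..1, ψ t
        = ∑ i, ∫ t in (0:ℝ)..1, ∑ k, (star x i * x k) * (G t) i k := by
      rw [hψdef]
      refine integral_finset_sum (f := fun i t => ∑ k, (star x i * x k) * (G t) i k)
        (fun i _ => ?_)
      refine ContinuousOn.intervalIntegrable ?_
      rw [Set.uIcc_of_le (zero_le_one)]
      exact continuousOn_finset_sum _ fun k _ => continuousOn_const.mul (hGcont i k)
    have h2 : ∀ i, (∫ t in (0:ℝ)..1, ∑ k, (star x i * x k) * (G t) i k)
        = ∑ k, (star x i * x k) * X i k := by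
      intro i
      rw [integral_finset_sum (f := fun k t => (star x i * x k) * (G t) i k)
        (fun k _ => (hGint i k).const_mul _)]
      refine Finset.sum_congr rfl fun k _ => ?_
      rw [integral_const_mul, ← hXe i k]
    rw [quad_expand X x, h1]
    exact (Finset.sum_congr rfl fun i _ => h2 i).symm
  set α := star x ⬝ᵥ ((U * Pf * Uᴴ) *ᵥ x) with hα
  set β := star x ⬝ᵥ ((U * Qf * Uᴴ) *ᵥ x) with hβ
  have hconj : ∀ (a b : ℝ), U * (a • Pf + b • Qf) * Uᴴ
      = (a:ℂ) • (U * Pf * Uᴴ) + (b:ℂ) • (U * Qf * Uᴴ) := by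
    intro a b
    rw [real_smul_mat a, real_smul_mat b, Matrix.mul_add, Matrix.mul_smul, Matrix.mul_smul,
      Matrix.add_mul, Matrix.smul_mul, Matrix.smul_mul]
  have hRt : ∀ a b : ℝ, star x ⬝ᵥ ((U * (a • Pf + b • Qf) * Uᴴ) *ᵥ x)
      = (a:ℂ) * α + (b:ℂ) * β := by
    intro a b
    rw [hconj a b, Matrix.add_mulVec, Matrix.smul_mulVec, Matrix.smul_mulVec,
      dotProduct_add, dotProduct_smul, dotProduct_smul,
      smul_eq_mul, smul_eq_mul, hα, hβ]
  have hYq : star x ⬝ᵥ ((U * ((1/2:ℝ) • (Pf + Qf)) * Uᴴ) *ᵥ x)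
      = ((1/2:ℝ):ℂ) * α + ((1/2:ℝ):ℂ) * β := by
    have : (1/2:ℝ) • (Pf + Qf) = (1/2:ℝ) • Pf + (1/2:ℝ) • Qf := smul_add _ _ _
    rw [this]
    exact hRt (1/2) (1/2)
  have hint1 : IntervalIntegrable (fun t : ℝ => (t:ℂ) * α + ((1-t:ℝ):ℂ) * β)
      MeasureTheory.volume 0 1 := by
    apply Continuous.intervalIntegrable
    fun_prop
  have haff : (∫ t in (0:ℝ)..1, ((t:ℂ) * α + ((1-t:ℝ):ℂ) * β))
      = ((1/2:ℝ):ℂ) * α + ((1/2:ℝ):ℂ) * β := by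
    have e1 : ∀ (c : ℂ) (t : ℝ), (t:ℂ) * c = t • c := fun c t => (Complex.real_smul).symm
    have i1 : IntervalIntegrable (fun t : ℝ => (t:ℂ) * α) MeasureTheory.volume 0 1 := by
      apply Continuous.intervalIntegrable; fun_prop
    have i2 : IntervalIntegrable (fun t : ℝ => ((1-t:ℝ):ℂ) * β) MeasureTheory.volume 0 1 := by
      apply Continuous.intervalIntegrable; fun_prop
    rw [integral_add i1 i2]
    have h1 : (∫ t in (0:ℝ)..1, (t:ℂ) * α) = ((1/2:ℝ):ℂ) * α := by
      simp only [e1]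
      rw [intervalIntegral.integral_smul_const (fun t : ℝ => t) α]
      rw [integral_id]
      norm_num [Complex.real_smul]
    have h2 : (∫ t in (0:ℝ)..1, ((1-t:ℝ):ℂ) * β) = ((1/2:ℝ):ℂ) * β := by
      simp only [e1]
      rw [intervalIntegral.integral_smul_const (fun t : ℝ => (1:ℝ) - t) β]
      have : (∫ t in (0:ℝ)..1, ((1:ℝ) - t)) = 1/2 := by
        rw [integral_sub intervalIntegrable_const intervalIntegral.intervalIntegrable_id]
        rw [integral_const, integral_id]
        norm_num
      rw [this]
    rw [h1, h2]
  set θ : ℝ → ℂ := fun t =>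
    ((t:ℂ) * α + ((1-t:ℝ):ℂ) * β) - ψ t with hθdef
  have hθint : IntervalIntegrable θ MeasureTheory.volume 0 1 := hint1.sub hψint
  have hsub : star x ⬝ᵥ ((U * ((1/2:ℝ) • (Pf + Qf)) * Uᴴ - X) *ᵥ x)
      = ∫ t in (0:ℝ)..1, θ t := by
    rw [Matrix.sub_mulVec, dotProduct_sub, hXq, hYq, ← haff,
      ← integral_sub hint1 hψint]
  have hθ0 : ∀ t ∈ Set.Icc (0:ℝ) 1, 0 ≤ θ t := by
    intro t ht
    have h := (hpos t ht).dotProduct_mulVec_nonneg x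
    rw [Matrix.sub_mulVec, dotProduct_sub] at h
    rw [hθdef]
    simp only []
    rw [← hψG t, ← hRt t (1-t)]
    push_cast
    exact h
  rw [hsub]
  rw [Complex.le_def]
  constructor
  · have hre : (∫ t in (0:ℝ)..1, θ t).re = ∫ t in (0:ℝ)..1, (θ t).re := by
      have := Complex.reCLM.intervalIntegral_comp_comm hθint
      simpa using this.symm
    rw [hre]
    simp only [Complex.zero_re]
    refine integral_nonneg zero_le_one fun u hu => ?_
    have := (Complex.le_def.mp (hθ0 u hu)).1
    simpa using this
  · have him : (∫ t in (0:ℝ)..1, θ t).im = ∫ t in (0:ℝ)..1, (θ t).im := by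
      have := Complex.imCLM.intervalIntegral_comp_comm hθint
      simpa using this.symm
    rw [him]
    simp only [Complex.zero_im]
    have : ∫ t in (0:ℝ)..1, (θ t).im = ∫ t in (0:ℝ)..1, (0:ℝ) := by
      refine integral_congr fun u hu => ?_
      rw [Set.uIcc_of_le (zero_le_one)] at hu
      have := (Complex.le_def.mp (hθ0 u hu)).2
      simpa using this.symm
    rw [this]
    simp


end HH

/-- Let `A, B` be Hermitian with spectra in `[ω, Ω]`, `f` increasing, convex (and
continuous) on `[ω, Ω]`, and `Φ` a unital positive linear map. If there is a unitary
`U` with `f(tΦ(A)+(1-t)Φ(B)) ≤ U[tΦ(f(A))+(1-t)Φ(f(B))]U*` for all `t ∈ [0,1]`, then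
`λ_j(∫_0^1 f(Φ(tA+(1-t)B)) dt) ≤ λ_j((Φ(f(A))+Φ(f(B)))/2)` for every `j`.
The integral is taken entrywise. -/
theorem eigenvalue_hermite_hadamard_second
    {n m : ℕ} (A B : Matrix (Fin n) (Fin n) ℂ)
    (hA : A.IsHermitian) (hB : B.IsHermitian) (ω Ω : ℝ)
    (hsA : spectrum ℝ A ⊆ Set.Icc ω Ω) (hsB : spectrum ℝ B ⊆ Set.Icc ω Ω)
    (f : ℝ → ℝ) (hmono : MonotoneOn f (Set.Icc ω Ω))
    (hconv : ConvexOn ℝ (Set.Icc ω Ω) f) (hcont : ContinuousOn f (Set.Icc ω Ω))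
    (Φ : Matrix (Fin n) (Fin n) ℂ →ₗ[ℂ] Matrix (Fin m) (Fin m) ℂ)
    (hpos : ∀ X : Matrix (Fin n) (Fin n) ℂ, X.PosSemidef → (Φ X).PosSemidef)
    (hunital : Φ 1 = 1)
    (U : Matrix (Fin m) (Fin m) ℂ) (hU : U ∈ Matrix.unitaryGroup (Fin m) ℂ)
    (hUineq : ∀ t ∈ Set.Icc (0:ℝ) 1,
      (U * (t • Φ (cfc f A) + (1 - t) • Φ (cfc f B)) * Uᴴ
        - cfc f (t • Φ A + (1 - t) • Φ B)).PosSemidef)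
    (hX : (Matrix.of fun i j =>
        ∫ t in (0:ℝ)..1, (cfc f (Φ (t • A + (1 - t) • B))) i j
          : Matrix (Fin m) (Fin m) ℂ).IsHermitian)
    (hY : ((1/2 : ℝ) • (Φ (cfc f A) + Φ (cfc f B))).IsHermitian) :
    ∀ j : Fin m, eigDesc hX j ≤ eigDesc hY j := by
  classical
  intro j
  rcases Nat.eq_zero_or_pos n with hn | hn
  · exfalso
    subst hn
    have h10 : (1 : Matrix (Fin 0) (Fin 0) ℂ) = 0 := by
      ext i
      exact i.elim0
    have h2 : (1 : Matrix (Fin m) (Fin m) ℂ) = 0 := by rw [← hunital, h10, map_zero]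
    have h3 := congrFun (congrFun h2 j) j
    rw [Matrix.one_apply_eq, Matrix.zero_apply] at h3
    exact one_ne_zero h3
  · have hAeig : ∀ i, hA.eigenvalues i ∈ Set.Icc ω Ω := fun i =>
      hsA (hA.eigenvalues_mem_spectrum_real i)
    have hBeig : ∀ i, hB.eigenvalues i ∈ Set.Icc ω Ω := fun i =>
      hsB (hB.eigenvalues_mem_spectrum_real i)
    have hΦsmul : ∀ (r : ℝ) (C : Matrix (Fin n) (Fin n) ℂ), Φ (r • C) = r • Φ C := by
      intro r C
      rw [HH.real_smul_mat, map_smul, ← HH.real_smul_mat]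
    have hP1 : (Φ A - ω • 1).PosSemidef := by
      have := hpos _ (HH.psd_sub_smul_one hA fun i => (hAeig i).1)
      rwa [map_sub, hΦsmul, hunital] at this
    have hP2 : (Ω • 1 - Φ A).PosSemidef := by
      have := hpos _ (HH.psd_smul_one_sub hA fun i => (hAeig i).2)
      rwa [map_sub, hΦsmul, hunital] at this
    have hQ1 : (Φ B - ω • 1).PosSemidef := by
      have := hpos _ (HH.psd_sub_smul_one hB fun i => (hBeig i).1)
      rwa [map_sub, hΦsmul, hunital] at this
    have hQ2 : (Ω • 1 - Φ B).PosSemidef := by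
      have := hpos _ (HH.psd_smul_one_sub hB fun i => (hBeig i).2)
      rwa [map_sub, hΦsmul, hunital] at this
    have hPh : (Φ A).IsHermitian := by
      have h := hP1.1.add (HH.isHermitian_real_smul ω Matrix.isHermitian_one)
      rwa [sub_add_cancel] at h
    have hQh : (Φ B).IsHermitian := by
      have h := hQ1.1.add (HH.isHermitian_real_smul ω Matrix.isHermitian_one)
      rwa [sub_add_cancel] at h
    have hGcont : ∀ i k, ContinuousOn
        (fun t : ℝ => (cfc f (t • Φ A + (1 - t) • Φ B)) i k) (Set.Icc (0:ℝ) 1) :=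
      fun i k => HH.cfc_entry_continuousOn hPh hQh hP1 hP2 hQ1 hQ2 f hcont i k
    have harg : ∀ t : ℝ, Φ (t • A + (1 - t) • B) = t • Φ A + (1 - t) • Φ B := by
      intro t
      rw [map_add, hΦsmul, hΦsmul]
    have hXe : ∀ i k, (Matrix.of fun i k =>
        ∫ t in (0:ℝ)..1, (cfc f (Φ (t • A + (1 - t) • B))) i k
          : Matrix (Fin m) (Fin m) ℂ) i k
        = ∫ t in (0:ℝ)..1, (cfc f (t • Φ A + (1 - t) • Φ B)) i k := by
      intro i k
      simp only [Matrix.of_apply]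
      have he : (fun t : ℝ => (cfc f (Φ (t • A + (1 - t) • B))) i k)
          = fun t : ℝ => (cfc f (t • Φ A + (1 - t) • Φ B)) i k := by
        funext t
        rw [harg t]
      rw [he]
    have hHerm : (U * ((1/2:ℝ) • (Φ (cfc f A) + Φ (cfc f B))) * Uᴴ
        - (Matrix.of fun i k =>
            ∫ t in (0:ℝ)..1, (cfc f (Φ (t • A + (1 - t) • B))) i k
              : Matrix (Fin m) (Fin m) ℂ)).IsHermitian :=
      (Matrix.isHermitian_mul_mul_conjTranspose U hY).sub hX
    have hpsd := HH.key_psd U (Φ (cfc f A)) (Φ (cfc f B))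
      (fun t => cfc f (t • Φ A + (1 - t) • Φ B)) hGcont _ hXe hHerm hUineq
    exact HH.weyl hX hY U hU hpsd j
end

section
/- Let A, B be bounded self-adjoint operators on a Hilbert space with spectra in [ω, Ω], f : [ω, Ω] → (0, ∞) convex, and Φ : M_n → M_m a unital positive linear map with A, B ∈ M_n Hermitian. Set α = max{ ((Ω−t)/(Ω−ω))·f(ω)/f(t) + ((t−ω)/(Ω−ω))·f(Ω)/f(t) : t ∈ [ω, Ω] }. Then Φ(∫_0^1 f(tA+(1-t)B) dt) ≤ α · (f(Φ(A)) + f(Φ(B)))/2. -/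
open scoped ComplexOrder Pointwise

namespace MPHH

variable {n m : ℕ}

lemma contOn_spec (M : Matrix (Fin n) (Fin n) ℂ) (g : ℝ → ℝ) :
    ContinuousOn g (spectrum ℝ M) :=
  Matrix.finite_real_spectrum.continuousOn g

lemma cfc_psd {M : Matrix (Fin n) (Fin n) ℂ} (hM : M.IsHermitian) (g : ℝ → ℝ)
    (hg : ∀ x ∈ spectrum ℝ M, 0 ≤ g x) : (cfc g M).PosSemidef := by
  rw [hM.cfc_eq]
  unfold Matrix.IsHermitian.cfc
  rw [Unitary.conjStarAlgAut_apply, Matrix.star_eq_conjTranspose]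
  apply Matrix.PosSemidef.mul_mul_conjTranspose_same
  apply Matrix.PosSemidef.diagonal
  intro i
  simpa using Complex.zero_le_real.mpr (hg _ (hM.eigenvalues_mem_spectrum_real i))

lemma cfc_mono_psd {M : Matrix (Fin n) (Fin n) ℂ} (hM : M.IsHermitian) (g h : ℝ → ℝ)
    (hgh : ∀ x ∈ spectrum ℝ M, g x ≤ h x) : (cfc h M - cfc g M).PosSemidef := by
  rw [← cfc_sub h g M (contOn_spec M h) (contOn_spec M g)]
  exact cfc_psd hM _ fun x hx => sub_nonneg.2 (hgh x hx)

lemma cfc_affine {M : Matrix (Fin n) (Fin n) ℂ} (hM : M.IsHermitian) (c d : ℝ) :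
    cfc (fun x : ℝ => c + d * x) M = c • (1 : Matrix (Fin n) (Fin n) ℂ) + d • M := by
  have h1 : cfc (fun x : ℝ => c + d * x) M
      = cfc (fun _ : ℝ => c) M + cfc (fun x : ℝ => d * x) M := by
    rw [← cfc_add M _ _ (contOn_spec M _) (contOn_spec M _)]
  rw [h1, cfc_const c M, cfc_const_mul d _ M (contOn_spec M _), cfc_id' ℝ M]
  congr 1
  simp [Algebra.algebraMap_eq_smul_one]

lemma herm_rsmul {M : Matrix (Fin n) (Fin n) ℂ} (hM : M.IsHermitian) (r : ℝ) :
    (r • M).IsHermitian := by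
  unfold Matrix.IsHermitian at *
  rw [Matrix.conjTranspose_smul, hM]
  norm_num

lemma psd_rsmul {M : Matrix (Fin n) (Fin n) ℂ} (hM : M.PosSemidef) {r : ℝ} (hr : 0 ≤ r) :
    (r • M).PosSemidef := by
  refine Matrix.PosSemidef.of_dotProduct_mulVec_nonneg (herm_rsmul hM.1 r) fun x => ?_
  have := hM.dotProduct_mulVec_nonneg x
  rw [Matrix.smul_mulVec, dotProduct_smul]
  exact smul_nonneg (by exact_mod_cast hr) this

lemma psd_spec {N : Matrix (Fin n) (Fin n) ℂ} (hN : N.PosSemidef) :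
    spectrum ℝ N ⊆ Set.Ici 0 := by
  rw [hN.isHermitian.spectrum_real_eq_range_eigenvalues]
  rintro x ⟨i, rfl⟩
  exact hN.eigenvalues_nonneg i

lemma smul_one_eq_algebraMap (r : ℝ) :
    r • (1 : Matrix (Fin n) (Fin n) ℂ) = algebraMap ℝ (Matrix (Fin n) (Fin n) ℂ) r :=
  (Algebra.algebraMap_eq_smul_one r).symm

lemma psd_of_spec {M : Matrix (Fin n) (Fin n) ℂ} (hM : M.IsHermitian) {a b : ℝ}
    (hs : spectrum ℝ M ⊆ Set.Icc a b) :
    (M - a • 1).PosSemidef ∧ (b • (1 : Matrix (Fin n) (Fin n) ℂ) - M).PosSemidef := by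
  constructor
  · have := cfc_mono_psd hM (fun _ : ℝ => a) id (fun x hx => (hs hx).1)
    rwa [cfc_id ℝ M, cfc_const a M, ← smul_one_eq_algebraMap] at this
  · have := cfc_mono_psd hM id (fun _ : ℝ => b) (fun x hx => (hs hx).2)
    rwa [cfc_id ℝ M, cfc_const b M, ← smul_one_eq_algebraMap] at this

lemma spec_of_psd {M : Matrix (Fin n) (Fin n) ℂ} (hM : M.IsHermitian) {a b : ℝ}
    (h1 : (M - a • 1).PosSemidef) (h2 : (b • (1 : Matrix (Fin n) (Fin n) ℂ) - M).PosSemidef) :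
    spectrum ℝ M ⊆ Set.Icc a b := by
  intro x hx
  constructor
  · have hmem : x - a ∈ spectrum ℝ M - {a} := Set.sub_mem_sub hx rfl
    rw [spectrum.sub_singleton_eq] at hmem
    rw [← smul_one_eq_algebraMap] at hmem
    have := psd_spec h1 hmem
    simpa using this
  · have hmem : b - x ∈ {b} - spectrum ℝ M := Set.sub_mem_sub rfl hx
    rw [spectrum.singleton_sub_eq] at hmem
    rw [← smul_one_eq_algebraMap] at hmem
    have := psd_spec h2 hmem
    simpa using this

lemma unitary_entry_le {U : Matrix (Fin n) (Fin n) ℂ} (hU : U ∈ Matrix.unitaryGroup (Fin n) ℂ)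
    (i k : Fin n) : ‖U i k‖ ≤ 1 := by
  have h1 : (U * star U) i i = 1 := by
    rw [Unitary.mul_star_self_of_mem hU]; simp
  rw [Matrix.mul_apply] at h1
  have h2 : ∑ l, Complex.normSq (U i l) = 1 := by
    have := congrArg Complex.re h1
    simpa [Matrix.star_apply, Complex.mul_conj] using this
  have h3 : Complex.normSq (U i k) ≤ 1 := by
    rw [← h2]
    exact Finset.single_le_sum (fun l _ => Complex.normSq_nonneg _) (Finset.mem_univ k)
  rw [← Complex.sq_norm] at h3
  nlinarith [norm_nonneg (U i k)]

lemma cfc_entry_bound {M : Matrix (Fin n) (Fin n) ℂ} (hM : M.IsHermitian) (g : ℝ → ℝ)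
    {s : Set ℝ} (hs : spectrum ℝ M ⊆ s) {ε : ℝ} (hg : ∀ x ∈ s, |g x| ≤ ε) (i j : Fin n) :
    ‖(cfc g M) i j‖ ≤ n * ε := by
  have hε : 0 ≤ ε := le_trans (abs_nonneg _)
    (hg _ (hs (hM.eigenvalues_mem_spectrum_real i)))
  rw [hM.cfc_eq]
  unfold Matrix.IsHermitian.cfc
  rw [Unitary.conjStarAlgAut_apply]
  set U : Matrix (Fin n) (Fin n) ℂ := (Matrix.IsHermitian.eigenvectorUnitary hM : Matrix (Fin n) (Fin n) ℂ) with hUdef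
  have hUmem : U ∈ Matrix.unitaryGroup (Fin n) ℂ := SetLike.coe_mem _
  have hentry : (U * (Matrix.diagonal (RCLike.ofReal ∘ g ∘ hM.eigenvalues) : Matrix (Fin n) (Fin n) ℂ) * star U) i j
      = ∑ k, U i k * (g (hM.eigenvalues k) : ℂ) * star (U j k) := by
    rw [Matrix.mul_apply]
    congr 1
    ext k
    rw [Matrix.mul_diagonal, Matrix.star_apply]
    simp [mul_comm]
  rw [hentry]
  calc ‖∑ k, U i k * (g (hM.eigenvalues k) : ℂ) * star (U j k)‖
      ≤ ∑ k, ‖U i k * (g (hM.eigenvalues k) : ℂ) * star (U j k)‖ :=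
        norm_sum_le _ _
    _ ≤ ∑ _k : Fin n, ε := by
        apply Finset.sum_le_sum
        intro k _
        rw [norm_mul, norm_mul]
        have h1 := unitary_entry_le hUmem i k
        have h2 : ‖star (U j k)‖ ≤ 1 := by
          rw [Complex.star_def, Complex.norm_conj]; exact unitary_entry_le hUmem j k
        have h3 : ‖(g (hM.eigenvalues k) : ℂ)‖ ≤ ε := by
          rw [Complex.norm_real, Real.norm_eq_abs]
          exact hg _ (hs (hM.eigenvalues_mem_spectrum_real k))
        calc ‖U i k‖ * ‖(g (hM.eigenvalues k) : ℂ)‖ * ‖star (U j k)‖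
            ≤ 1 * ε * 1 := by
              apply mul_le_mul _ h2 (norm_nonneg _) (by positivity)
              exact mul_le_mul h1 h3 (norm_nonneg _) zero_le_one
          _ = ε := by ring
    _ = n * ε := by simp [Finset.sum_const, nsmul_eq_mul]

lemma cfc_entry_continuousOn {A B : Matrix (Fin n) (Fin n) ℂ}
    {a b : ℝ} (f : ℝ → ℝ) (hcont : ContinuousOn f (Set.Icc a b))
    (hCherm : ∀ t : ℝ, (t • A + (1 - t) • B).IsHermitian)
    (hCspec : ∀ t ∈ Set.Icc (0:ℝ) 1, spectrum ℝ (t • A + (1 - t) • B) ⊆ Set.Icc a b)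
    (i j : Fin n) :
    ContinuousOn (fun t : ℝ => (cfc f (t • A + (1 - t) • B)) i j) (Set.Icc (0:ℝ) 1) := by
  set C : ℝ → Matrix (Fin n) (Fin n) ℂ := fun t => t • A + (1 - t) • B with hC
  have hp : ∀ k : ℕ, ∃ p : Polynomial ℝ,
      ∀ x ∈ Set.Icc a b, |Polynomial.eval x p - f x| < 1 / (k + 1) :=
    fun k => exists_polynomial_near_of_continuousOn a b f hcont _
      (by positivity)
  choose p hp using hp
  have hCc : Continuous C := by
    apply Continuous.add
    · exact continuous_id.smul continuous_const
    · exact (continuous_const.sub continuous_id).smul continuous_const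
  have hGc : ∀ k : ℕ, Continuous fun t : ℝ => (Polynomial.aeval (C t) (p k)) i j := by
    intro k
    have h1 : Continuous fun M : Matrix (Fin n) (Fin n) ℂ => (Polynomial.aeval M (p k)) i j := by
      have := (p k).continuous_aeval (A := Matrix (Fin n) (Fin n) ℂ)
      fun_prop
    exact h1.comp hCc
  have hunif : TendstoUniformlyOn (fun k t => (Polynomial.aeval (C t) (p k)) i j)
      (fun t => (cfc f (C t)) i j) Filter.atTop (Set.Icc 0 1) := by
    rw [Metric.tendstoUniformlyOn_iff]
    intro ε hε
    obtain ⟨K, hK⟩ := exists_nat_gt ((n : ℝ) / ε)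
    filter_upwards [Filter.eventually_ge_atTop K] with k hk t ht
    have hpoly : (Polynomial.aeval (C t) (p k)) = cfc (fun x => Polynomial.eval x (p k)) (C t) :=
      (cfc_polynomial (p k) (C t) (hCherm t)).symm
    rw [dist_eq_norm, hpoly]
    have hsub : (cfc f (C t)) i j - (cfc (fun x => Polynomial.eval x (p k)) (C t)) i j
        = (cfc (fun x => f x - Polynomial.eval x (p k)) (C t)) i j := by
      rw [cfc_sub f (fun x => Polynomial.eval x (p k)) (C t)
        (Matrix.finite_real_spectrum.continuousOn f) (Matrix.finite_real_spectrum.continuousOn _)]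
      simp [Matrix.sub_apply]
    rw [hsub]
    have hbound := cfc_entry_bound (hCherm t) (fun x => f x - Polynomial.eval x (p k))
      (hCspec t ht) (ε := 1 / (k + 1))
      (fun x hx => by
        rw [abs_sub_comm]
        exact le_of_lt (hp k x hx)) i j
    calc ‖(cfc (fun x => f x - Polynomial.eval x (p k)) (C t)) i j‖
        ≤ n * (1 / (k + 1)) := hbound
      _ < ε := by
          rw [div_lt_iff₀ hε] at hK
          have hk1 : (K : ℝ) + 1 ≤ (k : ℝ) + 1 := by have := (Nat.cast_le (α := ℝ)).mpr hk; linarith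
          have hkpos : (0:ℝ) < (k:ℝ) + 1 := by positivity
          rw [mul_one_div, div_lt_iff₀ hkpos]
          calc (n : ℝ) < ε * K := by rw [mul_comm]; exact hK
            _ ≤ ε * ((k:ℝ) + 1) := by nlinarith
  exact hunif.continuousOn (Filter.Eventually.of_forall fun k => (hGc k).continuousOn).frequently

lemma rsmul_eq (r : ℝ) (M : Matrix (Fin n) (Fin n) ℂ) : r • M = (r : ℂ) • M := by
  ext i j
  simp [Complex.real_smul]

lemma phi_rsmul (Φ : Matrix (Fin n) (Fin n) ℂ →ₗ[ℂ] Matrix (Fin m) (Fin m) ℂ) (r : ℝ)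
    (X : Matrix (Fin n) (Fin n) ℂ) : Φ (r • X) = r • Φ X := by
  rw [rsmul_eq, map_smul, ← rsmul_eq]

lemma phi_herm {Φ : Matrix (Fin n) (Fin n) ℂ →ₗ[ℂ] Matrix (Fin m) (Fin m) ℂ}
    (hpos : ∀ X : Matrix (Fin n) (Fin n) ℂ, X.PosSemidef → (Φ X).PosSemidef)
    {X : Matrix (Fin n) (Fin n) ℂ} (hX : X.IsHermitian) : (Φ X).IsHermitian := by
  have hd : X = cfc (fun y : ℝ => max y 0) X - cfc (fun y : ℝ => max (-y) 0) X := by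
    rw [← cfc_sub _ _ X (contOn_spec X _) (contOn_spec X _)]
    have h2 : (fun y : ℝ => max y 0 - max (-y) 0) = fun y : ℝ => y := by
      funext y
      rcases le_total y 0 with h | h
      · rw [max_eq_right h, max_eq_left (by linarith)]; ring
      · rw [max_eq_left h, max_eq_right (by linarith)]; ring
    rw [h2]
    exact (cfc_id' ℝ X hX).symm
  rw [hd, map_sub]
  exact ((hpos _ (cfc_psd hX _ (fun y _ => le_max_right _ _))).1).sub
        ((hpos _ (cfc_psd hX _ (fun y _ => le_max_right _ _))).1)

lemma creal {z : ℂ} (h : 0 ≤ z) : z = (z.re : ℂ) ∧ 0 ≤ z.re := by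
  rw [Complex.le_def] at h
  refine ⟨Complex.ext (by simp) (by simp [← h.2]), h.1⟩

/-- The quadratic form as a linear map. -/
noncomputable def qf {k : ℕ} (x : Fin k → ℂ) : Matrix (Fin k) (Fin k) ℂ →ₗ[ℂ] ℂ where
  toFun M := dotProduct (star x) (M.mulVec x)
  map_add' M N := by simp [Matrix.add_mulVec, dotProduct_add]
  map_smul' c M := by simp [Matrix.smul_mulVec, dotProduct_smul]

lemma qf_apply {k : ℕ} (x : Fin k → ℂ) (M : Matrix (Fin k) (Fin k) ℂ) :
    qf x M = dotProduct (star x) (M.mulVec x) := rfl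

lemma qf_psd {k : ℕ} (x : Fin k → ℂ) {M : Matrix (Fin k) (Fin k) ℂ} (hM : M.PosSemidef) :
    0 ≤ qf x M := hM.dotProduct_mulVec_nonneg x

lemma qf_rsmul {k : ℕ} (x : Fin k → ℂ) (r : ℝ) (M : Matrix (Fin k) (Fin k) ℂ) :
    qf x (r • M) = (r : ℂ) * qf x M := by
  rw [rsmul_eq, map_smul, smul_eq_mul]

end MPHH

open scoped ComplexOrder
open MPHH

set_option maxHeartbeats 1000000 in
/-- Mond–Pečarić type reverse Hermite–Hadamard inequality. -/
theorem mond_pecaric_hermite_hadamard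
    {n m : ℕ} (A B : Matrix (Fin n) (Fin n) ℂ)
    (hA : A.IsHermitian) (hB : B.IsHermitian) (ω Ω : ℝ) (hωΩ : ω < Ω)
    (hsA : spectrum ℝ A ⊆ Set.Icc ω Ω) (hsB : spectrum ℝ B ⊆ Set.Icc ω Ω)
    (f : ℝ → ℝ) (hconv : ConvexOn ℝ (Set.Icc ω Ω) f)
    (hcont : ContinuousOn f (Set.Icc ω Ω))
    (hfpos : ∀ t ∈ Set.Icc ω Ω, 0 < f t)
    (Φ : Matrix (Fin n) (Fin n) ℂ →ₗ[ℂ] Matrix (Fin m) (Fin m) ℂ)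
    (hpos : ∀ X : Matrix (Fin n) (Fin n) ℂ, X.PosSemidef → (Φ X).PosSemidef)
    (hunital : Φ 1 = 1)
    (α : ℝ)
    (hα : IsGreatest ((fun t => (Ω - t) / (Ω - ω) * (f ω / f t)
        + (t - ω) / (Ω - ω) * (f Ω / f t)) '' Set.Icc ω Ω) α) :
    (α • ((1/2 : ℝ) • (cfc f (Φ A) + cfc f (Φ B)))
      - Φ (Matrix.of fun i j =>
          ∫ t in (0:ℝ)..1, (cfc f (t • A + (1 - t) • B)) i j)).PosSemidef := by
  classical
  have hΩω : Ω - ω ≠ 0 := sub_ne_zero.mpr hωΩ.ne'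
  have hωmem : ω ∈ Set.Icc ω Ω := ⟨le_rfl, hωΩ.le⟩
  have hΩmem : Ω ∈ Set.Icc ω Ω := ⟨hωΩ.le, le_rfl⟩
  set c₁ : ℝ := (f Ω - f ω) / (Ω - ω) with hc₁
  set c₀ : ℝ := (Ω * f ω - ω * f Ω) / (Ω - ω) with hc₀
  -- scalar inequalities
  have hfL : ∀ x ∈ Set.Icc ω Ω, f x ≤ c₀ + c₁ * x := by
    intro x hx
    obtain ⟨hx1, hx2⟩ := hx
    have h1 : (0:ℝ) ≤ (Ω - x)/(Ω - ω) := div_nonneg (by linarith) (by linarith)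
    have h2 : (0:ℝ) ≤ (x - ω)/(Ω - ω) := div_nonneg (by linarith) (by linarith)
    have h3 : (Ω - x)/(Ω - ω) + (x - ω)/(Ω - ω) = 1 := by field_simp; ring
    have h4 := hconv.2 hωmem hΩmem h1 h2 h3
    have h5 : ((Ω - x)/(Ω - ω)) • ω + ((x - ω)/(Ω - ω)) • Ω = x := by
      rw [smul_eq_mul, smul_eq_mul]; field_simp; ring
    rw [h5] at h4
    calc f x ≤ ((Ω - x)/(Ω - ω)) • f ω + ((x - ω)/(Ω - ω)) • f Ω := h4
      _ = c₀ + c₁ * x := by rw [smul_eq_mul, smul_eq_mul, hc₀, hc₁]; field_simp; ring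
  have hLα : ∀ x ∈ Set.Icc ω Ω, c₀ + c₁ * x ≤ α * f x := by
    intro x hx
    have hfx := hfpos x hx
    have h := hα.2 ⟨x, hx, rfl⟩
    have he : ((Ω - x)/(Ω - ω) * (f ω / f x) + (x - ω)/(Ω - ω) * (f Ω / f x)) * f x
        = c₀ + c₁ * x := by
      rw [hc₀, hc₁]; field_simp; ring
    calc c₀ + c₁ * x
        = ((Ω - x)/(Ω - ω) * (f ω / f x) + (x - ω)/(Ω - ω) * (f Ω / f x)) * f x := he.symm
      _ ≤ α * f x := mul_le_mul_of_nonneg_right h hfx.le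
  have hα1 : (1:ℝ) ≤ α := by
    have hval : (Ω - ω) / (Ω - ω) * (f ω / f ω) + (ω - ω) / (Ω - ω) * (f Ω / f ω) = 1 := by
      rw [div_self hΩω, div_self (hfpos ω hωmem).ne']; ring
    exact hα.2 ⟨ω, hωmem, hval⟩
  -- the path C t
  set C : ℝ → Matrix (Fin n) (Fin n) ℂ := fun t => t • A + (1 - t) • B with hCdef
  have hCherm : ∀ t : ℝ, (C t).IsHermitian := fun t => (herm_rsmul hA t).add (herm_rsmul hB (1 - t))
  have hApsd := psd_of_spec hA hsA
  have hBpsd := psd_of_spec hB hsB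
  have hCspec : ∀ t ∈ Set.Icc (0:ℝ) 1, spectrum ℝ (C t) ⊆ Set.Icc ω Ω := by
    intro t ht
    have e1 : C t - ω • 1 = t • (A - ω • 1) + (1 - t) • (B - ω • 1) := by
      simp only [hCdef]; module
    have e2 : Ω • (1 : Matrix (Fin n) (Fin n) ℂ) - C t
        = t • (Ω • 1 - A) + (1 - t) • (Ω • 1 - B) := by
      simp only [hCdef]; module
    refine spec_of_psd (hCherm t) ?_ ?_
    · rw [e1]
      exact (psd_rsmul hApsd.1 ht.1).add (psd_rsmul hBpsd.1 (by linarith [ht.2]))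
    · rw [e2]
      exact (psd_rsmul hApsd.2 ht.1).add (psd_rsmul hBpsd.2 (by linarith [ht.2]))
  -- Φ A and Φ B
  have hΦ1 : ∀ r : ℝ, Φ (r • (1 : Matrix (Fin n) (Fin n) ℂ)) = r • (1 : Matrix (Fin m) (Fin m) ℂ) :=
    fun r => by rw [phi_rsmul, hunital]
  have hΦAherm : (Φ A).IsHermitian := phi_herm hpos hA
  have hΦBherm : (Φ B).IsHermitian := phi_herm hpos hB
  have hΦAspec : spectrum ℝ (Φ A) ⊆ Set.Icc ω Ω := by
    refine spec_of_psd hΦAherm ?_ ?_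
    · have := hpos _ hApsd.1
      rwa [map_sub, hΦ1] at this
    · have := hpos _ hApsd.2
      rwa [map_sub, hΦ1] at this
  have hΦBspec : spectrum ℝ (Φ B) ⊆ Set.Icc ω Ω := by
    refine spec_of_psd hΦBherm ?_ ?_
    · have := hpos _ hBpsd.1
      rwa [map_sub, hΦ1] at this
    · have := hpos _ hBpsd.2
      rwa [map_sub, hΦ1] at this
  -- F t
  set F : ℝ → Matrix (Fin n) (Fin n) ℂ := fun t => cfc f (C t) with hFdef
  have hFherm : ∀ t : ℝ, (F t).IsHermitian := by
    intro t
    have : IsSelfAdjoint (cfc f (C t)) := cfc_predicate f (C t)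
    exact this
  have hFcont : ∀ i j, ContinuousOn (fun t => F t i j) (Set.Icc (0:ℝ) 1) :=
    fun i j => cfc_entry_continuousOn f hcont hCherm hCspec i j
  have hFint : ∀ i j, IntervalIntegrable (fun t => F t i j) MeasureTheory.volume 0 1 :=
    fun i j => ((hFcont i j).mono (by rw [Set.uIcc_of_le zero_le_one])).intervalIntegrable
  set Mint := Matrix.of (fun i j => ∫ t in (0:ℝ)..1, F t i j) with hMintdef
  have hMherm : Mint.IsHermitian := by
    show Mint.conjTranspose = Mint
    ext i j
    rw [Matrix.conjTranspose_apply, hMintdef, Matrix.of_apply, Matrix.of_apply]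
    rw [intervalIntegral.integral_of_le zero_le_one, intervalIntegral.integral_of_le zero_le_one,
      Complex.star_def, ← integral_conj]
    congr 1
    funext t
    exact congrFun (congrFun (hFherm t) i) j
  -- the PSD matrices on the Φ side
  set KA : Matrix (Fin m) (Fin m) ℂ := c₀ • 1 + c₁ • Φ A with hKAdef
  set KB : Matrix (Fin m) (Fin m) ℂ := c₀ • 1 + c₁ • Φ B with hKBdef
  set GA : Matrix (Fin m) (Fin m) ℂ := cfc f (Φ A) with hGAdef
  set GB : Matrix (Fin m) (Fin m) ℂ := cfc f (Φ B) with hGBdef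
  have hDA : (α • GA - KA).PosSemidef := by
    have h := cfc_mono_psd hΦAherm (fun x => c₀ + c₁ * x) (fun x => α * f x)
      (fun x hx => hLα x (hΦAspec hx))
    rwa [cfc_const_mul α f (Φ A) (contOn_spec _ _), cfc_affine hΦAherm] at h
  have hDB : (α • GB - KB).PosSemidef := by
    have h := cfc_mono_psd hΦBherm (fun x => c₀ + c₁ * x) (fun x => α * f x)
      (fun x hx => hLα x (hΦBspec hx))
    rwa [cfc_const_mul α f (Φ B) (contOn_spec _ _), cfc_affine hΦBherm] at h
  have hPA : (α • GA).PosSemidef := by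
    have h := cfc_psd hΦAherm (fun x => α * f x)
      (fun x hx => mul_nonneg (by linarith) (hfpos x (hΦAspec hx)).le)
    rwa [cfc_const_mul α f (Φ A) (contOn_spec _ _)] at h
  have hPB : (α • GB).PosSemidef := by
    have h := cfc_psd hΦBherm (fun x => α * f x)
      (fun x hx => mul_nonneg (by linarith) (hfpos x (hΦBspec hx)).le)
    rwa [cfc_const_mul α f (Φ B) (contOn_spec _ _)] at h
  have hGApsd : GA.PosSemidef := cfc_psd hΦAherm f (fun x hx => (hfpos x (hΦAspec hx)).le)
  have hGBpsd : GB.PosSemidef := cfc_psd hΦBherm f (fun x hx => (hfpos x (hΦBspec hx)).le)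
  -- Hermitian-ness of the target
  refine Matrix.PosSemidef.of_dotProduct_mulVec_nonneg ?_ ?_
  · exact (herm_rsmul ((herm_rsmul (hGApsd.1.add hGBpsd.1) _)) α).sub (phi_herm hpos hMherm)
  -- quadratic form
  intro x
  show (0:ℂ) ≤ qf x (α • ((1/2 : ℝ) • (GA + GB)) - Φ Mint)
  -- expansion of qf ∘ Φ through entries
  set c : Fin n → Fin n → ℂ := fun i j => qf x (Φ (Matrix.single i j 1)) with hcdef
  have hexp : ∀ X : Matrix (Fin n) (Fin n) ℂ, qf x (Φ X) = ∑ i, ∑ j, X i j * c i j := by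
    intro X
    conv_lhs => rw [Matrix.matrix_eq_sum_single X]
    rw [map_sum, map_sum]
    congr 1; funext i
    rw [map_sum, map_sum]
    congr 1; funext j
    have : Matrix.single i j (X i j) = X i j • Matrix.single i j 1 := by
      rw [Matrix.smul_single, smul_eq_mul, mul_one]
    rw [this, map_smul, map_smul, smul_eq_mul]
  set q : ℝ → ℂ := fun t => qf x (Φ (F t)) with hqdef
  have hqcont : ContinuousOn q (Set.Icc (0:ℝ) 1) := by
    have : q = fun t => ∑ i, ∑ j, F t i j * c i j := by
      funext t; rw [hqdef]; exact hexp (F t)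
    rw [this]
    apply continuousOn_finset_sum
    intro i _
    apply continuousOn_finset_sum
    intro j _
    exact (hFcont i j).mul continuousOn_const
  have hqint : IntervalIntegrable q MeasureTheory.volume 0 1 :=
    ((hqcont).mono (by rw [Set.uIcc_of_le zero_le_one])).intervalIntegrable
  have hswap : qf x (Φ Mint) = ∫ t in (0:ℝ)..1, q t := by
    rw [hexp Mint]
    have h1 : ∀ i j : Fin n, Mint i j * c i j = ∫ t in (0:ℝ)..1, F t i j * c i j :=
      fun i j => (intervalIntegral.integral_mul_const _ _).symm
    calc ∑ i, ∑ j, Mint i j * c i j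
        = ∑ i, ∑ j, ∫ t in (0:ℝ)..1, F t i j * c i j :=
          Finset.sum_congr rfl fun i _ => Finset.sum_congr rfl fun j _ => h1 i j
      _ = ∫ t in (0:ℝ)..1, ∑ i, ∑ j, F t i j * c i j := by
          have hint2 : ∀ i : Fin n, IntervalIntegrable (fun t => ∑ j, F t i j * c i j)
              MeasureTheory.volume 0 1 := by
            intro i
            apply ContinuousOn.intervalIntegrable
            apply ContinuousOn.mono _ (by rw [Set.uIcc_of_le zero_le_one] :
              Set.uIcc (0:ℝ) 1 ⊆ Set.Icc (0:ℝ) 1)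
            exact continuousOn_finset_sum _ (fun j _ => (hFcont i j).mul continuousOn_const)
          have e1 : (∫ t in (0:ℝ)..1, ∑ i, ∑ j, F t i j * c i j)
              = ∑ i, ∫ t in (0:ℝ)..1, ∑ j, F t i j * c i j :=
            intervalIntegral.integral_finset_sum (fun i _ => hint2 i)
          have e2 : ∀ i : Fin n, (∫ t in (0:ℝ)..1, ∑ j, F t i j * c i j)
              = ∑ j, ∫ t in (0:ℝ)..1, F t i j * c i j :=
            fun i => intervalIntegral.integral_finset_sum (fun j _ => (hFint i j).mul_const _)
          rw [e1]
          exact Finset.sum_congr rfl fun i _ => (e2 i).symm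
      _ = ∫ t in (0:ℝ)..1, q t := by
          simp only [← hexp]; rfl
  -- realness and positivity of q on [0,1]
  have hqreal : ∀ t ∈ Set.Icc (0:ℝ) 1, q t = ((q t).re : ℂ) ∧ 0 ≤ (q t).re := by
    intro t ht
    exact creal (qf_psd x (hpos _ (cfc_psd (hCherm t) f
      (fun y hy => (hfpos y (hCspec t ht hy)).le))))
  set r : ℝ → ℝ := fun t => (q t).re with hrdef
  have hrcont : ContinuousOn r (Set.Icc (0:ℝ) 1) :=
    Complex.continuous_re.comp_continuousOn hqcont
  have hrint : IntervalIntegrable r MeasureTheory.volume 0 1 :=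
    ((hrcont).mono (by rw [Set.uIcc_of_le zero_le_one])).intervalIntegrable
  -- K values are real
  have hKAreal : qf x KA = (((qf x KA).re : ℝ) : ℂ) := by
    have h1 : (qf x (α • GA)).im = 0 := by rw [(creal (qf_psd x hPA)).1]; simp
    have h2 : (qf x (α • GA - KA)).im = 0 := by rw [(creal (qf_psd x hDA)).1]; simp
    have him : (qf x KA).im = 0 := by
      have e : qf x KA = qf x (α • GA) - qf x (α • GA - KA) := by
        rw [← map_sub]; congr 1; abel
      rw [e, Complex.sub_im, h1, h2]; ring
    exact Complex.ext (by simp) (by simp [him])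
  have hKBreal : qf x KB = (((qf x KB).re : ℝ) : ℂ) := by
    have h1 : (qf x (α • GB)).im = 0 := by rw [(creal (qf_psd x hPB)).1]; simp
    have h2 : (qf x (α • GB - KB)).im = 0 := by rw [(creal (qf_psd x hDB)).1]; simp
    have him : (qf x KB).im = 0 := by
      have e : qf x KB = qf x (α • GB) - qf x (α • GB - KB) := by
        rw [← map_sub]; congr 1; abel
      rw [e, Complex.sub_im, h1, h2]; ring
    exact Complex.ext (by simp) (by simp [him])
  set kA : ℝ := (qf x KA).re with hkAdef
  set kB : ℝ := (qf x KB).re with hkBdef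
  -- the comparison function
  have hQmat : ∀ t : ℝ, Φ (cfc (fun y => c₀ + c₁ * y) (C t)) = t • KA + (1 - t) • KB := by
    intro t
    rw [cfc_affine (hCherm t), map_add, hΦ1, phi_rsmul]
    rw [hCdef]
    simp only [map_add, phi_rsmul]
    rw [hKAdef, hKBdef]
    module
  have hrQ : ∀ t ∈ Set.Icc (0:ℝ) 1, r t ≤ t * kA + (1 - t) * kB := by
    intro t ht
    have hpsd : (cfc (fun y => c₀ + c₁ * y) (C t) - F t).PosSemidef := by
      have := cfc_mono_psd (hCherm t) f (fun y => c₀ + c₁ * y)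
        (fun y hy => hfL y (hCspec t ht hy))
      exact this
    have h0 : (0:ℂ) ≤ qf x (Φ (cfc (fun y => c₀ + c₁ * y) (C t))) - q t := by
      rw [hqdef]
      rw [← map_sub, ← map_sub]
      exact qf_psd x (hpos _ hpsd)
    have hle : q t ≤ qf x (Φ (cfc (fun y => c₀ + c₁ * y) (C t))) := sub_nonneg.1 h0
    have hQval : qf x (Φ (cfc (fun y => c₀ + c₁ * y) (C t)))
        = (((t * kA + (1 - t) * kB : ℝ)) : ℂ) := by
      rw [hQmat t, map_add, qf_rsmul, qf_rsmul, hKAreal, hKBreal]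
      push_cast
      ring
    rw [hQval] at hle
    have := (Complex.le_def.1 hle).1
    rw [(hqreal t ht).1] at this
    simpa using this
  have hQint : IntervalIntegrable (fun t => t * kA + (1 - t) * kB) MeasureTheory.volume 0 1 := by
    apply Continuous.intervalIntegrable; fun_prop
  have hintle : (∫ t in (0:ℝ)..1, r t) ≤ ∫ t in (0:ℝ)..1, (t * kA + (1 - t) * kB) :=
    intervalIntegral.integral_mono_on zero_le_one hrint hQint hrQ
  have hQcalc : (∫ t in (0:ℝ)..1, (t * kA + (1 - t) * kB)) = kA / 2 + kB / 2 := by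
    have i1 : IntervalIntegrable (fun t : ℝ => t * kA) MeasureTheory.volume 0 1 := by
      apply Continuous.intervalIntegrable; fun_prop
    have i2 : IntervalIntegrable (fun t : ℝ => (1 - t) * kB) MeasureTheory.volume 0 1 := by
      apply Continuous.intervalIntegrable; fun_prop
    rw [intervalIntegral.integral_add i1 i2, intervalIntegral.integral_mul_const,
      intervalIntegral.integral_mul_const, integral_id]
    have h3 : (∫ t in (0:ℝ)..1, (1 - t)) = 1/2 := by
      have e : (∫ t in (0:ℝ)..1, (1 - t)) = (∫ _t in (0:ℝ)..1, (1:ℝ)) - ∫ t in (0:ℝ)..1, t :=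
        intervalIntegral.integral_sub intervalIntegrable_const
          (continuous_id.intervalIntegrable 0 1)
      rw [e, integral_id, intervalIntegral.integral_const]
      norm_num
    rw [h3]
    ring
  -- integral of q is real
  have hqr : (∫ t in (0:ℝ)..1, q t) = (((∫ t in (0:ℝ)..1, r t) : ℝ) : ℂ) := by
    have : (∫ t in (0:ℝ)..1, q t) = ∫ t in (0:ℝ)..1, ((r t : ℝ) : ℂ) := by
      apply intervalIntegral.integral_congr
      intro t ht
      rw [Set.uIcc_of_le zero_le_one] at ht
      exact (hqreal t ht).1
    rw [this, intervalIntegral.integral_ofReal]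
  -- final splitting
  have hsplit : α • ((1/2 : ℝ) • (GA + GB)) - Φ Mint
      = (1/2 : ℝ) • ((α • GA - KA) + (α • GB - KB)) + ((1/2 : ℝ) • (KA + KB) - Φ Mint) := by
    module
  rw [hsplit]
  have hgoal : qf x ((1/2 : ℝ) • ((α • GA - KA) + (α • GB - KB)) + ((1/2 : ℝ) • (KA + KB) - Φ Mint))
      = (((1:ℝ)/2 : ℝ) : ℂ) * (qf x (α • GA - KA) + qf x (α • GB - KB))
        + ((((1:ℝ)/2 : ℝ) : ℂ) * (qf x KA + qf x KB) - qf x (Φ Mint)) := by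
    simp only [map_add, map_sub, qf_rsmul]
  rw [hgoal]
  have hv : (((1:ℝ)/2 : ℝ) : ℂ) * (qf x KA + qf x KB) - qf x (Φ Mint)
      = (((kA / 2 + kB / 2 - ∫ t in (0:ℝ)..1, r t : ℝ)) : ℂ) := by
    rw [hKAreal, hKBreal, hswap, hqr]
    push_cast
    ring
  have hu : (0:ℂ) ≤ (((1:ℝ)/2 : ℝ) : ℂ) * (qf x (α • GA - KA) + qf x (α • GB - KB)) := by
    apply mul_nonneg
    · exact Complex.zero_le_real.mpr (by norm_num)
    · exact add_nonneg (qf_psd x hDA) (qf_psd x hDB)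
  have hw : (0:ℂ) ≤ (((1:ℝ)/2 : ℝ) : ℂ) * (qf x KA + qf x KB) - qf x (Φ Mint) := by
    rw [hv]
    exact Complex.zero_le_real.mpr (by linarith [hintle, hQcalc])
  exact add_nonneg hu hw
end

section
/- Let A, B be bounded self-adjoint operators on a complex Hilbert space with spectra in an interval J, and f operator convex on J. Then for any positive integer N: f((A+B)/2) ≤ (1/N)·∑_{i=0}^{N-1} f(((2i+1)/(2N))·A + (1−(2i+1)/(2N))·B) ≤ ∫_0^1 f(tA+(1-t)B) dt ≤ (1/(2N))·∑_{i=0}^{N-1} [f(((i+1)/N)·A + (1−(i+1)/N)·B) + f((i/N)·A + (1−i/N)·B)] ≤ (f(A)+f(B))/2. -/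
set_option synthInstance.maxHeartbeats 1000000
set_option maxHeartbeats 2000000

open MeasureTheory intervalIntegral ContinuousLinearMap Set

section Aux

variable {H : Type*} [NormedAddCommGroup H] [InnerProductSpace ℂ H] [CompleteSpace H]

lemma aux_smul_nonneg {Z : H →L[ℂ] H} (hZ : 0 ≤ Z) {c : ℝ} (hc : 0 ≤ c) : 0 ≤ c • Z := by
  obtain ⟨d, rfl⟩ : ∃ d : ℝ, d ^ 2 = c := ⟨Real.sqrt c, Real.sq_sqrt hc⟩
  have h1 : IsSelfAdjoint (d • (1 : H →L[ℂ] H)) := by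
    rw [IsSelfAdjoint, star_smul, star_trivial, star_one]
  have h2 := star_left_conjugate_nonneg hZ (d • (1 : H →L[ℂ] H))
  rw [h1.star_eq] at h2
  convert h2 using 1
  rw [smul_mul_assoc, mul_smul_comm, one_mul, mul_one, smul_smul, sq]

lemma aux_smul_le_smul {X Y : H →L[ℂ] H} (h : X ≤ Y) {c : ℝ} (hc : 0 ≤ c) :
    c • X ≤ c • Y := by
  have := aux_smul_nonneg (sub_nonneg.mpr h) hc
  rwa [smul_sub, sub_nonneg] at this

lemma aux_integral_nonneg {a b : ℝ} (hab : a ≤ b) {k : ℝ → H →L[ℂ] H}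
    (hki : IntervalIntegrable k volume a b)
    (hk : ∀ t ∈ Set.Icc a b, 0 ≤ k t) : 0 ≤ ∫ t in a..b, k t := by
  rw [ContinuousLinearMap.nonneg_iff_isPositive, ContinuousLinearMap.isPositive_def']
  constructor
  · have h1 : star (∫ t in a..b, k t) = ∫ t in a..b, star (k t) := by
      exact ((starL' ℝ : (H →L[ℂ] H) ≃L[ℝ] (H →L[ℂ] H)).toContinuousLinearMap
        |>.intervalIntegral_comp_comm hki).symm
    rw [IsSelfAdjoint, h1]
    refine intervalIntegral.integral_congr fun t ht => ?_
    rw [Set.uIcc_of_le hab] at ht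
    exact (IsSelfAdjoint.of_nonneg (hk t ht)).star_eq
  · intro x
    let Φ : (H →L[ℂ] H) →L[ℝ] ℝ := Complex.reCLM.comp
      (((innerSL ℂ x).restrictScalars ℝ).comp
        ((ContinuousLinearMap.apply ℂ H x).restrictScalars ℝ))
    have h2 := Φ.intervalIntegral_comp_comm hki
    have h3 : ∀ t ∈ Set.Icc a b, 0 ≤ Φ (k t) := fun t ht => by
      simpa [Φ] using
        (ContinuousLinearMap.nonneg_iff_isPositive _ |>.mp (hk t ht)).re_inner_nonneg_right x
    have h4 : 0 ≤ ∫ t in a..b, Φ (k t) :=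
      intervalIntegral.integral_nonneg hab h3
    rw [h2] at h4
    have : (∫ t in a..b, k t).reApplyInnerSelf x = Φ (∫ t in a..b, k t) := by
      simp [Φ, ContinuousLinearMap.reApplyInnerSelf, inner_re_symm]
    rwa [this]

lemma aux_integral_mono {a b : ℝ} (hab : a ≤ b) {u v : ℝ → H →L[ℂ] H}
    (hui : IntervalIntegrable u volume a b) (hvi : IntervalIntegrable v volume a b)
    (h : ∀ t ∈ Set.Icc a b, u t ≤ v t) :
    (∫ t in a..b, u t) ≤ ∫ t in a..b, v t := by
  have := aux_integral_nonneg hab (hvi.sub hui) (fun t ht => sub_nonneg.mpr (h t ht))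
  rwa [intervalIntegral.integral_sub hvi hui, sub_nonneg] at this

lemma aux_cont (A B : H →L[ℂ] H) (m M : ℝ) (f : ℝ → ℝ)
    (hf : ContinuousOn f (Set.Icc m M))
    (hsa : ∀ t : ℝ, IsSelfAdjoint (t • A + (1 - t) • B))
    (hspec : ∀ t ∈ Set.Icc (0:ℝ) 1, spectrum ℝ (t • A + (1 - t) • B) ⊆ Set.Icc m M) :
    ContinuousOn (fun t => cfc f (t • A + (1 - t) • B)) (Set.Icc (0:ℝ) 1) := by
  set L : ℝ → H →L[ℂ] H := fun t => t • A + (1 - t) • B with hL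
  have hLc : Continuous L :=
    (continuous_id.smul continuous_const).add
      ((continuous_const.sub continuous_id).smul continuous_const)
  have key : ∀ n : ℕ, ∃ h : ℝ → H →L[ℂ] H, ContinuousOn h (Set.Icc (0:ℝ) 1) ∧
      ∀ t ∈ Set.Icc (0:ℝ) 1, dist (cfc f (L t)) (h t) ≤ 1 / (n + 1) := by
    intro n
    have hpos : (0:ℝ) < 1 / (n + 1) := by positivity
    obtain ⟨p, hp⟩ := exists_polynomial_near_of_continuousOn m M f hf _ hpos
    refine ⟨fun t => Polynomial.aeval (L t) p, (p.continuous_aeval.comp hLc).continuousOn, ?_⟩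
    intro t ht
    rw [dist_eq_norm]
    show ‖cfc f (L t) - Polynomial.aeval (L t) p‖ ≤ 1 / (n+1)
    rw [ ← cfc_polynomial p (L t) (hsa t),
      ← cfc_sub f p.eval (L t) (hf.mono (hspec t ht)) p.continuousOn]
    refine norm_cfc_le (A := H →L[ℂ] H) (f := fun x => f x - Polynomial.eval x p) hpos.le fun x hx => ?_
    have hxm : x ∈ Set.Icc m M := hspec t ht hx
    rw [Real.norm_eq_abs, abs_sub_comm]
    exact (hp x hxm).le
  choose hs hsc hsb using key
  have htu : TendstoUniformlyOn hs (fun t => cfc f (L t)) Filter.atTop (Set.Icc (0:ℝ) 1) := by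
    rw [Metric.tendstoUniformlyOn_iff]
    intro ε hε
    obtain ⟨n, hn⟩ := exists_nat_one_div_lt hε
    filter_upwards [Filter.eventually_ge_atTop n] with k hk x hx
    have h5 : (1:ℝ) / (k + 1) ≤ 1 / (n + 1) :=
      one_div_le_one_div_of_le (by positivity)
        (by have := (Nat.cast_le (α := ℝ)).mpr hk; linarith)
    exact ((hsb k x hx).trans h5).trans_lt hn
  exact htu.continuousOn (Filter.Eventually.of_forall hsc).frequently

end Aux

/-- Refined operator Hermite–Hadamard inequality: for bounded self-adjoint operators
`A, B` with spectra in an interval `J`, `f` operator convex (and continuous) on `J`,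
and any positive integer `N`,
`f((A+B)/2) ≤ (1/N)∑_{i<N} f(((2i+1)/(2N))A + (1−(2i+1)/(2N))B)
  ≤ ∫_0^1 f(tA+(1-t)B) dt
  ≤ (1/(2N))∑_{i<N} [f(((i+1)/N)A + (1−(i+1)/N)B) + f((i/N)A + (1−i/N)B)]
  ≤ (f(A)+f(B))/2` in the Loewner order. -/
theorem refined_operator_hermite_hadamard
    {H : Type*} [NormedAddCommGroup H] [InnerProductSpace ℂ H] [CompleteSpace H]
    (A B : H →L[ℂ] H) (hA : IsSelfAdjoint A) (hB : IsSelfAdjoint B)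
    (J : Set ℝ) (hJ : J.OrdConnected)
    (hsA : spectrum ℝ A ⊆ J) (hsB : spectrum ℝ B ⊆ J)
    (f : ℝ → ℝ) (hcont : ContinuousOn f J)
    (hopconv : ∀ (X Y : H →L[ℂ] H), IsSelfAdjoint X → IsSelfAdjoint Y →
      spectrum ℝ X ⊆ J → spectrum ℝ Y ⊆ J → ∀ l ∈ Set.Icc (0:ℝ) 1,
        cfc f (l • X + (1 - l) • Y) ≤ l • cfc f X + (1 - l) • cfc f Y)
    (N : ℕ) (hN : 0 < N) :
    cfc f ((1/2 : ℝ) • (A + B)) ≤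
        (1 / N : ℝ) • ∑ i ∈ Finset.range N,
          cfc f (((2 * i + 1) / (2 * N) : ℝ) • A + (1 - (2 * i + 1) / (2 * N) : ℝ) • B) ∧
      (1 / N : ℝ) • (∑ i ∈ Finset.range N,
          cfc f (((2 * i + 1) / (2 * N) : ℝ) • A + (1 - (2 * i + 1) / (2 * N) : ℝ) • B)) ≤
        ∫ t in (0:ℝ)..1, cfc f (t • A + (1 - t) • B) ∧
      (∫ t in (0:ℝ)..1, cfc f (t • A + (1 - t) • B)) ≤
        (1 / (2 * N) : ℝ) • ∑ i ∈ Finset.range N,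
          (cfc f (((i + 1) / N : ℝ) • A + (1 - (i + 1) / N : ℝ) • B)
            + cfc f ((i / N : ℝ) • A + (1 - i / N : ℝ) • B)) ∧
      (1 / (2 * N) : ℝ) • (∑ i ∈ Finset.range N,
          (cfc f (((i + 1) / N : ℝ) • A + (1 - (i + 1) / N : ℝ) • B)
            + cfc f ((i / N : ℝ) • A + (1 - i / N : ℝ) • B))) ≤
        (1/2 : ℝ) • (cfc f A + cfc f B) := by
  rcases subsingleton_or_nontrivial H with hsub | hn
  · have : Subsingleton (H →L[ℂ] H) := ⟨fun X Y => by ext x; exact Subsingleton.elim _ _⟩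
    exact ⟨le_of_eq (Subsingleton.elim _ _), le_of_eq (Subsingleton.elim _ _),
      le_of_eq (Subsingleton.elim _ _), le_of_eq (Subsingleton.elim _ _)⟩
  have hN0 : (0:ℝ) < (N:ℝ) := by exact_mod_cast hN
  set g : ℝ → H →L[ℂ] H := fun t => cfc f (t • A + (1 - t) • B) with hgdef
  set L : ℝ → H →L[ℂ] H := fun t => t • A + (1 - t) • B with hLdef
  have hLsa : ∀ t : ℝ, IsSelfAdjoint (L t) := by
    intro t
    have h1 : IsSelfAdjoint (t • A) := by rw [IsSelfAdjoint, star_smul, star_trivial, hA.star_eq]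
    have h2 : IsSelfAdjoint ((1-t) • B) := by
      rw [IsSelfAdjoint, star_smul, star_trivial, hB.star_eq]
    exact h1.add h2
  -- spectrum bounds
  set S : Set ℝ := spectrum ℝ A ∪ spectrum ℝ B with hSdef
  have hSne : S.Nonempty := (ContinuousFunctionalCalculus.spectrum_nonempty (R := ℝ) A hA).mono
    Set.subset_union_left
  have hSc : IsCompact S := (spectrum.isCompact A).union (spectrum.isCompact B)
  set m : ℝ := sInf S with hmdef
  set M : ℝ := sSup S with hMdef
  have hmS : m ∈ S := hSc.sInf_mem hSne
  have hMS : M ∈ S := hSc.sSup_mem hSne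
  have hSJ : S ⊆ J := Set.union_subset hsA hsB
  have hIccJ : Set.Icc m M ⊆ J := hJ.out (hSJ hmS) (hSJ hMS)
  have hmle : ∀ x ∈ S, m ≤ x := fun x hx => csInf_le hSc.bddBelow hx
  have hMge : ∀ x ∈ S, x ≤ M := fun x hx => le_csSup hSc.bddAbove hx
  have hAl : algebraMap ℝ (H →L[ℂ] H) m ≤ A :=
    algebraMap_le_of_le_spectrum (fun x hx => hmle x (Or.inl hx)) hA
  have hAu : A ≤ algebraMap ℝ (H →L[ℂ] H) M :=
    le_algebraMap_of_spectrum_le (fun x hx => hMge x (Or.inl hx)) hA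
  have hBl : algebraMap ℝ (H →L[ℂ] H) m ≤ B :=
    algebraMap_le_of_le_spectrum (fun x hx => hmle x (Or.inr hx)) hB
  have hBu : B ≤ algebraMap ℝ (H →L[ℂ] H) M :=
    le_algebraMap_of_spectrum_le (fun x hx => hMge x (Or.inr hx)) hB
  have hLspec : ∀ t ∈ Set.Icc (0:ℝ) 1, spectrum ℝ (L t) ⊆ Set.Icc m M := by
    intro t ht x hx
    have ht1 : (0:ℝ) ≤ t := ht.1
    have ht2 : (0:ℝ) ≤ 1 - t := by linarith [ht.2]
    have e : ∀ r : ℝ, algebraMap ℝ (H →L[ℂ] H) r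
        = t • algebraMap ℝ (H →L[ℂ] H) r + (1 - t) • algebraMap ℝ (H →L[ℂ] H) r := by
      intro r
      rw [← add_smul]
      norm_num
    have h1 : algebraMap ℝ (H →L[ℂ] H) m ≤ L t := by
      rw [e m]
      exact add_le_add (aux_smul_le_smul hAl ht1) (aux_smul_le_smul hBl ht2)
    have h2 : L t ≤ algebraMap ℝ (H →L[ℂ] H) M := by
      rw [e M]
      exact add_le_add (aux_smul_le_smul hAu ht1) (aux_smul_le_smul hBu ht2)
    exact ⟨(algebraMap_le_iff_le_spectrum (hLsa t)).mp h1 x hx,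
      (le_algebraMap_iff_spectrum_le (hLsa t)).mp h2 x hx⟩
  have hLspecJ : ∀ t ∈ Set.Icc (0:ℝ) 1, spectrum ℝ (L t) ⊆ J :=
    fun t ht => (hLspec t ht).trans hIccJ
  -- convexity of g on [0,1]
  have hconv : ∀ s ∈ Set.Icc (0:ℝ) 1, ∀ u ∈ Set.Icc (0:ℝ) 1, ∀ l ∈ Set.Icc (0:ℝ) 1,
      g (l * s + (1 - l) * u) ≤ l • g s + (1 - l) • g u := by
    intro s hs u hu l hl
    have h := hopconv (L s) (L u) (hLsa s) (hLsa u) (hLspecJ s hs) (hLspecJ u hu) l hl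
    have e : l • L s + (1 - l) • L u = L (l * s + (1 - l) * u) := by
      simp only [hLdef]
      module
    rw [e] at h
    exact h
  -- continuity and integrability
  have hgc : ContinuousOn g (Set.Icc (0:ℝ) 1) :=
    aux_cont A B m M f (hcont.mono hIccJ) hLsa hLspec
  have hgi : ∀ a b : ℝ, a ∈ Set.Icc (0:ℝ) 1 → b ∈ Set.Icc (0:ℝ) 1 →
      IntervalIntegrable g volume a b := by
    intro a b ha hb
    refine (hgc.mono ?_).intervalIntegrable
    rw [← Set.uIcc_of_le (zero_le_one' ℝ)]
    exact Set.uIcc_subset_uIcc (by rwa [Set.uIcc_of_le (zero_le_one' ℝ)])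
      (by rwa [Set.uIcc_of_le (zero_le_one' ℝ)])
  -- membership facts
  have hmem : ∀ i : ℕ, i ≤ N → ((i:ℝ)/N) ∈ Set.Icc (0:ℝ) 1 := by
    intro i hi
    constructor
    · positivity
    · rw [div_le_one hN0]
      exact_mod_cast hi
  have hmid : ∀ i : ℕ, i < N → ((2*(i:ℝ)+1)/(2*N)) ∈ Set.Icc (0:ℝ) 1 := by
    intro i hi
    constructor
    · positivity
    · rw [div_le_one (by positivity)]
      have : (i:ℝ) + 1 ≤ N := by exact_mod_cast hi
      linarith
  -- ===== Inequality 1 =====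
  have e0 : (1/2 : ℝ) • (A + B) = L (1/2 : ℝ) := by
    simp only [hLdef]
    module
  have half_mem : (1/2 : ℝ) ∈ Set.Icc (0:ℝ) 1 := by norm_num
  have key1 : ∀ i ∈ Finset.range N, g (1/2 : ℝ) ≤
      (1/2 : ℝ) • g ((2*(i:ℝ)+1)/(2*N)) + (1 - 1/2 : ℝ) • g ((2*((N - 1 - i : ℕ):ℝ)+1)/(2*N)) := by
    intro i hi
    have hi' : i < N := Finset.mem_range.mp hi
    have hj' : N - 1 - i < N := by omega
    have hjc : ((N - 1 - i : ℕ):ℝ) = (N:ℝ) - 1 - i := by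
      have : (N - 1 - i : ℕ) = N - (1 + i) := by omega
      rw [this, Nat.cast_sub (by omega)]
      push_cast
      ring
    have h := hconv _ (hmid i hi') _ (hmid _ hj') (1/2) half_mem
    have e : (1/2:ℝ) * ((2*(i:ℝ)+1)/(2*N)) + (1 - 1/2) * ((2*((N - 1 - i : ℕ):ℝ)+1)/(2*N))
        = 1/2 := by
      rw [hjc]
      field_simp
      ring
    rwa [e] at h
  have ineq1 : cfc f ((1/2 : ℝ) • (A + B)) ≤
      (1 / N : ℝ) • ∑ i ∈ Finset.range N, g ((2*(i:ℝ)+1)/(2*N)) := by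
    have hsum := Finset.sum_le_sum key1
    rw [Finset.sum_add_distrib, ← Finset.smul_sum, ← Finset.smul_sum,
      Finset.sum_range_reflect (fun i => g ((2*(i:ℝ)+1)/(2*N))) N] at hsum
    simp only [Finset.sum_const, Finset.card_range] at hsum
    rw [← add_smul] at hsum
    norm_num at hsum
    -- hsum : N • g (1/2) ≤ ∑ i in range N, g (...)
    have h2 := aux_smul_le_smul hsum (c := 1/(N:ℝ)) (by positivity)
    rw [← nsmul_eq_mul, ← Nat.cast_smul_eq_nsmul ℝ N (g (1/2 : ℝ)), smul_smul,
      one_div_mul_cancel hN0.ne', one_smul] at h2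
    rw [e0]
    exact h2
  -- ===== splitting the integral =====
  have hadj : ∀ k, k < N → IntervalIntegrable g volume ((k:ℝ)/N) (((k:ℝ)+1)/N) := by
    intro k hk
    have h2 := hmem (k+1) hk
    push_cast at h2
    exact hgi _ _ (hmem k hk.le) h2
  have hsplit : (∫ t in (0:ℝ)..1, g t)
      = ∑ i ∈ Finset.range N, ∫ t in ((i:ℝ)/N)..(((i:ℝ)+1)/N), g t := by
    have h := intervalIntegral.sum_integral_adjacent_intervals (μ := volume)
      (a := fun k : ℕ => (k:ℝ)/N) (n := N) (fun k hk => by push_cast; exact hadj k hk)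
    push_cast at h
    rw [zero_div, div_self hN0.ne'] at h
    exact h.symm
  -- ===== Inequality 2 =====
  have key2 : ∀ i ∈ Finset.range N, (1/(N:ℝ)) • g ((2*(i:ℝ)+1)/(2*N)) ≤
      ∫ t in ((i:ℝ)/N)..(((i:ℝ)+1)/N), g t := by
    intro i hi
    have hi' : i < N := Finset.mem_range.mp hi
    set c : ℝ := (2*(i:ℝ)+1)/(2*N) with hcdef
    set d : ℝ := 1/(2*(N:ℝ)) with hddef
    have hd0 : (0:ℝ) ≤ d := by rw [hddef]; positivity
    have hcd1 : c - d = (i:ℝ)/N := by rw [hcdef, hddef]; field_simp; ring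
    have hcd2 : c + d = ((i:ℝ)+1)/N := by rw [hcdef, hddef]; field_simp; ring
    have hc : c ∈ Set.Icc (0:ℝ) 1 := hmid i hi'
    have hiN : ((i:ℝ)/N) ∈ Set.Icc (0:ℝ) 1 := hmem i hi'.le
    have hi1N : (((i:ℝ)+1)/N) ∈ Set.Icc (0:ℝ) 1 := by
      have := hmem (i+1) hi'
      push_cast at this
      exact this
    have hsubmem : ∀ u ∈ Set.Icc (0:ℝ) d, (c - u) ∈ Set.Icc (0:ℝ) 1 := by
      intro u hu
      exact ⟨by linarith [hiN.1, hu.2, hcd1], by linarith [hc.2, hu.1]⟩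
    have haddmem : ∀ u ∈ Set.Icc (0:ℝ) d, (c + u) ∈ Set.Icc (0:ℝ) 1 := by
      intro u hu
      exact ⟨by linarith [hc.1, hu.1], by linarith [hi1N.2, hu.2, hcd2]⟩
    have hpt : ∀ u ∈ Set.Icc (0:ℝ) d, (fun _ : ℝ => g c) u ≤
        (fun u => (1/2:ℝ) • g (c - u) + (1 - 1/2:ℝ) • g (c + u)) u := by
      intro u hu
      have h := hconv _ (hsubmem u hu) _ (haddmem u hu) (1/2) half_mem
      have e : (1/2:ℝ) * (c - u) + (1 - 1/2) * (c + u) = c := by ring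
      rw [e] at h
      exact h
    have hconts : ContinuousOn (fun u : ℝ => g (c - u)) (Set.uIcc (0:ℝ) d) := by
      apply hgc.comp ((continuous_const.sub continuous_id).continuousOn)
      intro u hu
      rw [Set.uIcc_of_le hd0] at hu
      exact hsubmem u hu
    have hconta : ContinuousOn (fun u : ℝ => g (c + u)) (Set.uIcc (0:ℝ) d) := by
      apply hgc.comp ((continuous_const.add continuous_id).continuousOn)
      intro u hu
      rw [Set.uIcc_of_le hd0] at hu
      exact haddmem u hu
    have hint1 : IntervalIntegrable (fun u => (1/2:ℝ) • g (c - u)) volume 0 d :=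
      ContinuousOn.intervalIntegrable (u := fun u => (1/2:ℝ) • g (c - u)) (hconts.const_smul (1/2:ℝ))
    have hint2 : IntervalIntegrable (fun u => (1 - 1/2:ℝ) • g (c + u)) volume 0 d :=
      ContinuousOn.intervalIntegrable (u := fun u => (1 - 1/2:ℝ) • g (c + u)) (hconta.const_smul (1 - 1/2:ℝ))
    have hmono := aux_integral_mono hd0 intervalIntegrable_const (hint1.add hint2) hpt
    rw [intervalIntegral.integral_const, sub_zero,
      intervalIntegral.integral_add hint1 hint2,
      intervalIntegral.integral_smul, intervalIntegral.integral_smul,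
      intervalIntegral.integral_comp_sub_left g c,
      intervalIntegral.integral_comp_add_left g c,
      sub_zero, add_zero, hcd1, hcd2] at hmono
    have hadd2 : (∫ t in ((i:ℝ)/N)..c, g t) + ∫ t in c..(((i:ℝ)+1)/N), g t
        = ∫ t in ((i:ℝ)/N)..(((i:ℝ)+1)/N), g t :=
      intervalIntegral.integral_add_adjacent_intervals (hgi _ _ hiN hc) (hgi _ _ hc hi1N)
    have h2 := aux_smul_le_smul hmono (c := (2:ℝ)) (by norm_num)
    rw [smul_smul, smul_add, smul_smul, smul_smul] at h2
    have e2 : (2:ℝ) * d = 1/(N:ℝ) := by rw [hddef]; field_simp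
    have e3 : (2:ℝ) * (1/2) = 1 := by norm_num
    have e4 : (2:ℝ) * (1 - 1/2) = 1 := by norm_num
    rw [e2, e3, e4, one_smul, one_smul, hadd2] at h2
    exact h2
  have ineq2 : (1 / N : ℝ) • (∑ i ∈ Finset.range N, g ((2*(i:ℝ)+1)/(2*N))) ≤
      ∫ t in (0:ℝ)..1, g t := by
    rw [hsplit, Finset.smul_sum]
    exact Finset.sum_le_sum key2
  -- ===== Inequality 3 =====
  have key3 : ∀ i ∈ Finset.range N, (∫ t in ((i:ℝ)/N)..(((i:ℝ)+1)/N), g t) ≤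
      (1/(2*(N:ℝ))) • (g (((i:ℝ)+1)/N) + g ((i:ℝ)/N)) := by
    intro i hi
    have hi' : i < N := Finset.mem_range.mp hi
    set a : ℝ := (i:ℝ)/N with hadef
    set b : ℝ := ((i:ℝ)+1)/N with hbdef
    have hiN : a ∈ Set.Icc (0:ℝ) 1 := hmem i hi'.le
    have hi1N : b ∈ Set.Icc (0:ℝ) 1 := by
      have := hmem (i+1) hi'
      push_cast at this
      exact this
    have hab : a ≤ b := by
      rw [hadef, hbdef]
      exact (div_le_div_iff_of_pos_right hN0).mpr (by linarith)
    have hpt : ∀ t ∈ Set.Icc a b, g t ≤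
        (fun t => ((N:ℝ)*t - i) • g b + (1 - ((N:ℝ)*t - i)) • g a) t := by
      intro t ht
      have h1 : (i:ℝ) ≤ (N:ℝ) * t := by
        have := (div_le_iff₀ hN0).mp ht.1
        linarith [mul_comm t (N:ℝ)]
      have h2 : (N:ℝ) * t ≤ (i:ℝ) + 1 := by
        have := (le_div_iff₀ hN0).mp ht.2
        linarith [mul_comm t (N:ℝ)]
      have hl : ((N:ℝ)*t - i) ∈ Set.Icc (0:ℝ) 1 := ⟨by linarith, by linarith⟩
      have h := hconv b hi1N a hiN _ hl
      have e : ((N:ℝ)*t - i) * b + (1 - ((N:ℝ)*t - i)) * a = t := by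
        rw [hadef, hbdef]
        field_simp
        ring
      rw [e] at h
      exact h
    have hcont2 : Continuous (fun t : ℝ => (N:ℝ)*t) := by fun_prop
    have hcont1 : Continuous (fun t : ℝ => (N:ℝ)*t - (i:ℝ)) := by fun_prop
    have hc1 : Continuous fun t : ℝ => ((N:ℝ)*t - i) • g b := by fun_prop
    have hc2 : Continuous fun t : ℝ => (1 - ((N:ℝ)*t - i)) • g a := by fun_prop
    have hmono := aux_integral_mono (v := fun t => ((N:ℝ)*t - i) • g b + (1 - ((N:ℝ)*t - i)) • g a) hab (hgi a b hiN hi1N)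
      ((hc1.add hc2).intervalIntegrable a b) hpt
    rw [intervalIntegral.integral_add (hc1.intervalIntegrable a b)
        (hc2.intervalIntegrable a b),
      intervalIntegral.integral_smul_const, intervalIntegral.integral_smul_const] at hmono
    have s1 : (∫ t in a..b, ((N:ℝ)*t - i)) = 1/(2*(N:ℝ)) := by
      rw [intervalIntegral.integral_sub (hcont2.intervalIntegrable a b)
          (intervalIntegrable_const),
        intervalIntegral.integral_const_mul, integral_id, intervalIntegral.integral_const,
        hadef, hbdef]
      field_simp
      rw [smul_eq_mul]; field_simp; ring
    have s2 : (∫ t in a..b, (1 - ((N:ℝ)*t - i))) = 1/(2*(N:ℝ)) := by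
      rw [intervalIntegral.integral_sub intervalIntegrable_const
          (hcont1.intervalIntegrable a b),
        s1, intervalIntegral.integral_const, smul_eq_mul, mul_one, hadef, hbdef]
      field_simp
      ring
    rw [s1, s2, ← smul_add] at hmono
    exact hmono
  have ineq3 : (∫ t in (0:ℝ)..1, g t) ≤
      (1 / (2*(N:ℝ))) • ∑ i ∈ Finset.range N, (g (((i:ℝ)+1)/N) + g ((i:ℝ)/N)) := by
    rw [hsplit, Finset.smul_sum]
    exact Finset.sum_le_sum key3
  -- ===== Inequality 4 =====
  have gA : g 1 = cfc f A := by
    show cfc f ((1:ℝ) • A + (1 - 1:ℝ) • B) = cfc f A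
    rw [show (1:ℝ) • A + (1 - 1:ℝ) • B = A by module]
  have gB : g 0 = cfc f B := by
    show cfc f ((0:ℝ) • A + (1 - 0:ℝ) • B) = cfc f B
    rw [show (0:ℝ) • A + (1 - 0:ℝ) • B = B by module]
  have hend : ∀ r ∈ Set.Icc (0:ℝ) 1, g r ≤ r • cfc f A + (1 - r) • cfc f B := by
    intro r hr
    have h := hconv 1 (by norm_num) 0 (by norm_num) r hr
    rw [show r * 1 + (1 - r) * 0 = r by ring, gA, gB] at h
    exact h
  have key4 : ∀ i ∈ Finset.range N, g (((i:ℝ)+1)/N) + g ((i:ℝ)/N) ≤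
      ((2*(i:ℝ)+1)/N) • cfc f A + (2 - (2*(i:ℝ)+1)/N) • cfc f B := by
    intro i hi
    have hi' : i < N := Finset.mem_range.mp hi
    have hi1N : (((i:ℝ)+1)/N) ∈ Set.Icc (0:ℝ) 1 := by
      have := hmem (i+1) hi'
      push_cast at this
      exact this
    have h3 := add_le_add (hend _ hi1N) (hend _ (hmem i hi'.le))
    refine h3.trans_eq ?_
    rw [add_add_add_comm, ← add_smul, ← add_smul]
    congr 1
    · congr 1
      field_simp
      ring
    · congr 1
      field_simp
      ring
  have csum : ∑ i ∈ Finset.range N, ((2*(i:ℝ)+1)/N) = (N:ℝ) := by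
    have hsq : ∀ n : ℕ, ∑ i ∈ Finset.range n, (2*(i:ℝ)+1) = (n:ℝ)^2 := by
      intro n
      induction n with
      | zero => simp
      | succ k ih =>
        rw [Finset.sum_range_succ, ih]
        push_cast
        ring
    rw [← Finset.sum_div, hsq, sq, mul_div_assoc, div_self hN0.ne', mul_one]
  have ineq4 : (1/(2*(N:ℝ))) • (∑ i ∈ Finset.range N, (g (((i:ℝ)+1)/N) + g ((i:ℝ)/N))) ≤
      (1/2 : ℝ) • (cfc f A + cfc f B) := by
    have hsum := Finset.sum_le_sum key4
    have csum2 : ∑ i ∈ Finset.range N, (2 - (2*(i:ℝ)+1)/N) = (N:ℝ) := by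
      rw [Finset.sum_sub_distrib, Finset.sum_const, Finset.card_range, csum, nsmul_eq_mul]
      ring
    have hre : ∑ i ∈ Finset.range N, (((2*(i:ℝ)+1)/N) • cfc f A + (2 - (2*(i:ℝ)+1)/N) • cfc f B)
        = (N:ℝ) • cfc f A + (N:ℝ) • cfc f B := by
      rw [Finset.sum_add_distrib, ← Finset.sum_smul, ← Finset.sum_smul, csum, csum2]
    rw [hre] at hsum
    have h2 := aux_smul_le_smul hsum (c := 1/(2*(N:ℝ))) (by positivity)
    rw [smul_add, smul_smul, smul_smul] at h2
    have e5 : 1/(2*(N:ℝ)) * (N:ℝ) = 1/2 := by field_simp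
    rw [e5, ← smul_add] at h2
    exact h2
  simp only [hgdef] at ineq1 ineq2 ineq3 ineq4
  exact ⟨ineq1, ineq2, ineq3, ineq4⟩
end

section
/- Let A, B be bounded self-adjoint operators with spectra in an interval J and f operator convex on J. Then f((A+B)/2) ≤ ∫_0^1 f(tA+(1-t)B) dt ≤ (f(A)+f(B))/2 in the Loewner order. -/
open MeasureTheory intervalIntegral ContinuousLinearMap Set Polynomial

section helpers
variable {H : Type*} [NormedAddCommGroup H] [InnerProductSpace ℂ H] [CompleteSpace H]



lemma my_integral_isPositive {η : ℝ → H →L[ℂ] H}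
    (hint : IntervalIntegrable η volume 0 1)
    (hpos : ∀ t ∈ Set.Icc (0:ℝ) 1, (η t).IsPositive) :
    (∫ t in (0:ℝ)..1, η t).IsPositive := by
  rw [ContinuousLinearMap.isPositive_iff_complex]
  intro x
  have h1 : IntervalIntegrable (fun t => η t x) volume 0 1 :=
    ⟨(ContinuousLinearMap.apply ℂ H x).integrable_comp hint.1,
     (ContinuousLinearMap.apply ℂ H x).integrable_comp hint.2⟩
  have hax : (∫ t in (0:ℝ)..1, η t) x = ∫ t in (0:ℝ)..1, η t x :=
    ContinuousLinearMap.intervalIntegral_apply hint x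
  have h2 : (inner ℂ x ((∫ t in (0:ℝ)..1, η t) x) : ℂ)
      = ∫ t in (0:ℝ)..1, (inner ℂ x (η t x) : ℂ) := by
    rw [hax]
    exact ((innerSL ℂ x).intervalIntegral_comp_comm h1).symm
  set r : ℝ → ℝ := fun t => (RCLike.re (inner ℂ x (η t x) : ℂ)) with hr
  have hreal : ∀ t ∈ Set.Icc (0:ℝ) 1, ((r t : ℂ) = inner ℂ x (η t x)) ∧ 0 ≤ r t := by
    intro t ht
    obtain ⟨h1', h2'⟩ := (ContinuousLinearMap.isPositive_iff_complex (η t)).mp (hpos t ht) x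
    have hsym : (inner ℂ x (η t x) : ℂ)
        = ((RCLike.re (inner ℂ (η t x) x : ℂ) : ℝ) : ℂ) := by
      conv_lhs => rw [← inner_conj_symm, ← h1']
      exact Complex.conj_ofReal _
    refine ⟨?_, ?_⟩
    · rw [hr]; simp only []
      rw [hsym]
      simp
    · rw [hr]; simp only []
      rw [inner_re_symm]
      exact h2'
  have h3 : (∫ t in (0:ℝ)..1, (inner ℂ x (η t x) : ℂ)) = ((∫ t in (0:ℝ)..1, r t : ℝ) : ℂ) := by
    rw [← intervalIntegral.integral_ofReal]
    apply intervalIntegral.integral_congr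
    intro t ht
    rw [Set.uIcc_of_le (zero_le_one)] at ht
    exact ((hreal t ht).1).symm
  have hRnn : 0 ≤ ∫ t in (0:ℝ)..1, r t :=
    intervalIntegral.integral_nonneg zero_le_one (fun t ht => (hreal t ht).2)
  have hc : (inner ℂ ((∫ t in (0:ℝ)..1, η t) x) x : ℂ) = ((∫ t in (0:ℝ)..1, r t : ℝ) : ℂ) := by
    rw [← inner_conj_symm, h2, h3, Complex.conj_ofReal]
  refine ⟨?_, ?_⟩
  · rw [hc]; norm_cast
  · rw [hc]; simpa using hRnn

lemma my_integral_mono {φ ψ : ℝ → H →L[ℂ] H}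
    (hφ : IntervalIntegrable φ volume 0 1) (hψ : IntervalIntegrable ψ volume 0 1)
    (h : ∀ t ∈ Set.Icc (0:ℝ) 1, φ t ≤ ψ t) :
    (∫ t in (0:ℝ)..1, φ t) ≤ ∫ t in (0:ℝ)..1, ψ t := by
  rw [ContinuousLinearMap.le_def, ← intervalIntegral.integral_sub hψ hφ]
  exact my_integral_isPositive (hψ.sub hφ) fun t ht =>
    (ContinuousLinearMap.le_def _ _).mp (h t ht)




lemma my_cfc_continuousOn {L : ℝ → H →L[ℂ] H} {s : Set ℝ} (hLc : ContinuousOn L s)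
    {m M : ℝ} (hsa : ∀ t ∈ s, IsSelfAdjoint (L t))
    (hspec : ∀ t ∈ s, spectrum ℝ (L t) ⊆ Set.Icc m M)
    {f : ℝ → ℝ} (hf : ContinuousOn f (Set.Icc m M)) :
    ContinuousOn (fun t => cfc f (L t)) s := by
  set fK : C(Set.Icc m M, ℝ) := ⟨Set.Icc m M |>.restrict f, hf.restrict⟩ with hfK
  have key : ∀ ε > (0:ℝ), ∃ p : ℝ[X],
      ∀ t ∈ s, ‖cfc f (L t) - Polynomial.aeval (L t) p‖ ≤ ε := by
    intro ε hε
    obtain ⟨p, hp⟩ := exists_polynomial_near_continuousMap m M fK ε hε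
    refine ⟨p, fun t ht => ?_⟩
    have hfc : ContinuousOn f (spectrum ℝ (L t)) := hf.mono (hspec t ht)
    have hpc : ContinuousOn (fun x => p.eval x) (spectrum ℝ (L t)) :=
      (Polynomial.continuous p).continuousOn
    rw [← cfc_polynomial p (L t) (hsa t ht), ← cfc_sub _ _ _ hfc hpc]
    refine norm_cfc_le hε.le fun x hx => ?_
    have hxK : x ∈ Set.Icc m M := hspec t ht hx
    have := (p.toContinuousMapOn (Set.Icc m M) - fK).norm_coe_le_norm ⟨x, hxK⟩
    rw [Real.norm_eq_abs, abs_sub_comm]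
    calc |p.eval x - f x| ≤ ‖p.toContinuousMapOn (Set.Icc m M) - fK‖ := by
          simp [hfK, Real.norm_eq_abs] at this; exact this
      _ ≤ ε := hp.le
  choose p hp using fun n : ℕ => key (1/(n+1)) (by positivity)
  have htu : TendstoUniformlyOn (fun n t => Polynomial.aeval (L t) (p n))
      (fun t => cfc f (L t)) Filter.atTop s := by
    rw [Metric.tendstoUniformlyOn_iff]
    intro ε hε
    obtain ⟨N, hN⟩ := exists_nat_one_div_lt hε
    filter_upwards [Filter.eventually_ge_atTop N] with n hn t ht
    rw [dist_eq_norm]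
    calc ‖cfc f (L t) - Polynomial.aeval (L t) (p n)‖ ≤ 1/(n+1) := hp n t ht
      _ ≤ 1/(N+1) := by
          apply one_div_le_one_div_of_le (by positivity)
          exact_mod_cast add_le_add_left (Nat.cast_le.mpr hn) 1
      _ < ε := hN
  exact htu.continuousOn <| Filter.Eventually.frequently <| Filter.Eventually.of_forall fun n =>
    (Polynomial.continuous_aeval (p n)).comp_continuousOn hLc

end helpers

set_option synthInstance.maxHeartbeats 1000000 in
set_option maxHeartbeats 1000000 in
/-- Operator Hermite–Hadamard inequality: for bounded self-adjoint operators `A, B`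
with spectra in an interval `J` and `f` operator convex (and continuous) on `J`,
`f((A+B)/2) ≤ ∫_0^1 f(tA+(1-t)B) dt ≤ (f(A)+f(B))/2` in the Loewner order. -/
theorem operator_hermite_hadamard
    {H : Type*} [NormedAddCommGroup H] [InnerProductSpace ℂ H] [CompleteSpace H]
    (A B : H →L[ℂ] H) (hA : IsSelfAdjoint A) (hB : IsSelfAdjoint B)
    (J : Set ℝ) (hJ : J.OrdConnected)
    (hsA : spectrum ℝ A ⊆ J) (hsB : spectrum ℝ B ⊆ J)
    (f : ℝ → ℝ) (hcont : ContinuousOn f J)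
    (hopconv : ∀ (X Y : H →L[ℂ] H), IsSelfAdjoint X → IsSelfAdjoint Y →
      spectrum ℝ X ⊆ J → spectrum ℝ Y ⊆ J → ∀ l ∈ Set.Icc (0:ℝ) 1,
        cfc f (l • X + (1 - l) • Y) ≤ l • cfc f X + (1 - l) • cfc f Y) :
    cfc f ((1/2 : ℝ) • (A + B)) ≤ ∫ t in (0:ℝ)..1, cfc f (t • A + (1 - t) • B) ∧
      (∫ t in (0:ℝ)..1, cfc f (t • A + (1 - t) • B)) ≤
        (1/2 : ℝ) • (cfc f A + cfc f B) := by
  rcases subsingleton_or_nontrivial H with hH | hH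
  · have hsub : Subsingleton (H →L[ℂ] H) :=
      ⟨fun f g => ContinuousLinearMap.ext fun x => Subsingleton.elim _ _⟩
    exact ⟨le_of_eq (Subsingleton.elim _ _), le_of_eq (Subsingleton.elim _ _)⟩
  have hntr : Nontrivial (H →L[ℂ] H) := by
    refine ⟨0, 1, fun h => ?_⟩
    obtain ⟨x, hx⟩ := exists_ne (0 : H)
    have : (0 : H →L[ℂ] H) x = (1 : H →L[ℂ] H) x := by rw [h]
    simp at this
    exact hx this.symm
  -- compact nonempty spectra
  have hcA : IsCompact (spectrum ℝ A) := isCompact_iff_compactSpace.mpr inferInstance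
  have hcB : IsCompact (spectrum ℝ B) := isCompact_iff_compactSpace.mpr inferInstance
  have hneA : (spectrum ℝ A).Nonempty := ContinuousFunctionalCalculus.spectrum_nonempty A hA
  have hneB : (spectrum ℝ B).Nonempty := ContinuousFunctionalCalculus.spectrum_nonempty B hB
  set m : ℝ := min (sInf (spectrum ℝ A)) (sInf (spectrum ℝ B)) with hm
  set M : ℝ := max (sSup (spectrum ℝ A)) (sSup (spectrum ℝ B)) with hM
  have hmJ : m ∈ J := by
    rcases min_cases (sInf (spectrum ℝ A)) (sInf (spectrum ℝ B)) with ⟨h, _⟩ | ⟨h, _⟩ <;>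
      rw [hm, h]
    · exact hsA (hcA.sInf_mem hneA)
    · exact hsB (hcB.sInf_mem hneB)
  have hMJ : M ∈ J := by
    rcases max_cases (sSup (spectrum ℝ A)) (sSup (spectrum ℝ B)) with ⟨h, _⟩ | ⟨h, _⟩ <;>
      rw [hM, h]
    · exact hsA (hcA.sSup_mem hneA)
    · exact hsB (hcB.sSup_mem hneB)
  have hKJ : Set.Icc m M ⊆ J := hJ.out hmJ hMJ
  -- order bounds
  have hAm : algebraMap ℝ (H →L[ℂ] H) m ≤ A := by
    rw [algebraMap_le_iff_le_spectrum hA]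
    exact fun x hx => (min_le_left _ _).trans (csInf_le hcA.bddBelow hx)
  have hBm : algebraMap ℝ (H →L[ℂ] H) m ≤ B := by
    rw [algebraMap_le_iff_le_spectrum hB]
    exact fun x hx => (min_le_right _ _).trans (csInf_le hcB.bddBelow hx)
  have hAM : A ≤ algebraMap ℝ (H →L[ℂ] H) M := by
    rw [le_algebraMap_iff_spectrum_le hA]
    exact fun x hx => (le_csSup hcA.bddAbove hx).trans (le_max_left _ _)
  have hBM : B ≤ algebraMap ℝ (H →L[ℂ] H) M := by
    rw [le_algebraMap_iff_spectrum_le hB]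
    exact fun x hx => (le_csSup hcB.bddAbove hx).trans (le_max_right _ _)
  set L : ℝ → H →L[ℂ] H := fun t => t • A + (1 - t) • B with hL
  have hLsa : ∀ t ∈ Set.Icc (0:ℝ) 1, IsSelfAdjoint (L t) := fun t _ =>
    ((IsSelfAdjoint.all t).smul hA).add ((IsSelfAdjoint.all (1 - t)).smul hB)
  have hLspec : ∀ t ∈ Set.Icc (0:ℝ) 1, spectrum ℝ (L t) ⊆ Set.Icc m M := by
    intro t ht
    obtain ⟨ht0, ht1⟩ := ht
    have ht1' : (0:ℝ) ≤ 1 - t := by linarith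
    intro x hx
    have hlo : algebraMap ℝ (H →L[ℂ] H) m ≤ L t := by
      have h1 := smul_le_smul_of_nonneg_left hAm ht0
      have h2 := smul_le_smul_of_nonneg_left hBm ht1'
      have h3 := add_le_add h1 h2
      have : t • algebraMap ℝ (H →L[ℂ] H) m + (1 - t) • algebraMap ℝ (H →L[ℂ] H) m
          = algebraMap ℝ (H →L[ℂ] H) m := by
        rw [← add_smul]; ring_nf; rw [one_smul]
      rwa [this] at h3
    have hhi : L t ≤ algebraMap ℝ (H →L[ℂ] H) M := by
      have h1 := smul_le_smul_of_nonneg_left hAM ht0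
      have h2 := smul_le_smul_of_nonneg_left hBM ht1'
      have h3 := add_le_add h1 h2
      have : t • algebraMap ℝ (H →L[ℂ] H) M + (1 - t) • algebraMap ℝ (H →L[ℂ] H) M
          = algebraMap ℝ (H →L[ℂ] H) M := by
        rw [← add_smul]; ring_nf; rw [one_smul]
      rwa [this] at h3
    exact ⟨(algebraMap_le_iff_le_spectrum (hLsa t ⟨ht0, ht1⟩)).mp hlo x hx,
      (le_algebraMap_iff_spectrum_le (hLsa t ⟨ht0, ht1⟩)).mp hhi x hx⟩
  have hLspecJ : ∀ t ∈ Set.Icc (0:ℝ) 1, spectrum ℝ (L t) ⊆ J := fun t ht =>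
    (hLspec t ht).trans hKJ
  have hLc : ContinuousOn L (Set.Icc (0:ℝ) 1) := by fun_prop
  have hgc : ContinuousOn (fun t => cfc f (L t)) (Set.Icc (0:ℝ) 1) :=
    my_cfc_continuousOn hLc hLsa hLspec (hcont.mono hKJ)
  have hInt : IntervalIntegrable (fun t => cfc f (L t)) volume 0 1 :=
    (hgc.mono (by rw [Set.uIcc_of_le (zero_le_one)])).intervalIntegrable
  have hgoal : (∫ t in (0:ℝ)..1, cfc f (t • A + (1 - t) • B))
      = ∫ t in (0:ℝ)..1, cfc f (L t) := by simp only [hL]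
  rw [hgoal]
  constructor
  · -- lower bound
    have hptw : ∀ t ∈ Set.Icc (0:ℝ) 1, cfc f ((1/2 : ℝ) • (A + B)) ≤
        (1/2 : ℝ) • cfc f (L t) + (1/2 : ℝ) • cfc f (L (1 - t)) := by
      intro t ht
      have ht' : 1 - t ∈ Set.Icc (0:ℝ) 1 := ⟨by linarith [ht.2], by linarith [ht.1]⟩
      have h := hopconv (L t) (L (1 - t)) (hLsa t ht) (hLsa _ ht')
        (hLspecJ t ht) (hLspecJ _ ht') (1/2) (by norm_num)
      have harg : (1/2 : ℝ) • L t + (1 - 1/2 : ℝ) • L (1 - t) = (1/2 : ℝ) • (A + B) := by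
        rw [hL]; simp only; module
      rw [harg] at h
      convert h using 2 <;> norm_num
    have hIc : IntervalIntegrable (fun _ : ℝ => cfc f ((1/2 : ℝ) • (A + B))) volume 0 1 :=
      intervalIntegrable_const
    have hflipc : ContinuousOn (fun t => cfc f (L (1 - t))) (Set.Icc (0:ℝ) 1) := by
      apply hgc.comp (by fun_prop)
      intro t ht
      exact ⟨by linarith [ht.2], by linarith [ht.1]⟩
    have hflip : IntervalIntegrable (fun t => cfc f (L (1 - t))) volume 0 1 :=
      (hflipc.mono (by rw [Set.uIcc_of_le (zero_le_one)])).intervalIntegrable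
    have hs1 : IntervalIntegrable (fun t => (1/2 : ℝ) • cfc f (L t)) volume 0 1 :=
      ((hgc.const_smul (1/2 : ℝ)).mono
        (by rw [Set.uIcc_of_le (zero_le_one)])).intervalIntegrable
    have hs2 : IntervalIntegrable (fun t => (1/2 : ℝ) • cfc f (L (1 - t))) volume 0 1 :=
      ((hflipc.const_smul (1/2 : ℝ)).mono
        (by rw [Set.uIcc_of_le (zero_le_one)])).intervalIntegrable
    have hsum : IntervalIntegrable
        (fun t => (1/2 : ℝ) • cfc f (L t) + (1/2 : ℝ) • cfc f (L (1 - t))) volume 0 1 :=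
      hs1.add hs2
    have := my_integral_mono hIc hsum hptw
    rw [intervalIntegral.integral_const] at this
    simp only [sub_zero, one_smul] at this
    refine this.trans (le_of_eq ?_)
    rw [intervalIntegral.integral_add hs1 hs2,
      intervalIntegral.integral_smul, intervalIntegral.integral_smul]
    have hrev : (∫ t in (0:ℝ)..1, cfc f (L (1 - t))) = ∫ t in (0:ℝ)..1, cfc f (L t) := by
      have := intervalIntegral.integral_comp_sub_left (a := (0:ℝ)) (b := 1)
        (fun s => cfc f (L s)) 1
      simpa using this
    rw [hrev, ← add_smul]
    norm_num
  · -- upper bound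
    have hptw : ∀ t ∈ Set.Icc (0:ℝ) 1, cfc f (L t) ≤ t • cfc f A + (1 - t) • cfc f B := by
      simp only [hL]
      exact fun t ht => hopconv A B hA hB hsA hsB t ht
    have hsum : IntervalIntegrable (fun t => t • cfc f A + (1 - t) • cfc f B) volume 0 1 := by
      apply ContinuousOn.intervalIntegrable
      apply Continuous.continuousOn
      fun_prop
    refine (my_integral_mono hInt hsum hptw).trans (le_of_eq ?_)
    have h1 : IntervalIntegrable (fun t : ℝ => t • cfc f A) volume 0 1 := by
      apply ContinuousOn.intervalIntegrable; apply Continuous.continuousOn; fun_prop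
    have h2 : IntervalIntegrable (fun t : ℝ => (1 - t) • cfc f B) volume 0 1 := by
      apply ContinuousOn.intervalIntegrable; apply Continuous.continuousOn; fun_prop
    rw [intervalIntegral.integral_add h1 h2, intervalIntegral.integral_smul_const,
      intervalIntegral.integral_smul_const]
    have e1 : (∫ t in (0:ℝ)..1, t) = 1/2 := by
      rw [integral_id]; norm_num
    have e2 : (∫ t in (0:ℝ)..1, (1 - t)) = 1/2 := by
      rw [intervalIntegral.integral_sub intervalIntegrable_const intervalIntegrable_id,
        integral_id, intervalIntegral.integral_const]
      norm_num
    rw [e1, e2, smul_add]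
end
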